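/- arXiv:2305.03307 — 5 statements merged into one kernel-verified Lean document; each statement's English description precedes it below -/
import Mathlib

section
/- Let M be a matroid with a total order on its ground set. Every NBC independent set (an independent set containing no broken circuit) is contained in some NBC basis; i.e., the broken circuit complex is pure of dimension equal to the rank of M. -/
/-- `C` is a circuit of the matroid `M`: a minimal dependent subset of the ground set. -/
def Matroid.IsCircuitSet {α : Type*} (M : Matroid α) (C : Set α) : Prop :=
  C ⊆ M.E ∧ ¬ M.Indep C ∧ ∀ e ∈ C, M.Indep (C \ {e})

/-- `B` is a broken circuit of `M` with respect to the linear order on `α`: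
a circuit with its (strictly) smallest element removed. -/
def Matroid.IsBrokenCircuit {α : Type*} [LinearOrder α] (M : Matroid α) (B : Set α) : Prop :=
  ∃ C e, M.IsCircuitSet C ∧ e ∈ C ∧ (∀ x ∈ C, e ≤ x) ∧ B = C \ {e}

/-- An NBC independent set: an independent set containing no broken circuit. -/
def Matroid.IsNBCIndep {α : Type*} [LinearOrder α] (M : Matroid α) (I : Set α) : Prop :=
  M.Indep I ∧ ∀ B, M.IsBrokenCircuit B → ¬ B ⊆ I

/-- An NBC basis: a basis (maximal independent set) containing no broken circuit. -/
def Matroid.IsNBCBase {α : Type*} [LinearOrder α] (M : Matroid α) (B : Set α) : Prop :=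
  M.IsBase B ∧ ∀ B', M.IsBrokenCircuit B' → ¬ B' ⊆ B

/-- Every NBC independent set of a finite matroid (with a total order on its ground set)
is contained in some NBC basis: the broken circuit complex is pure. -/
theorem nbc_indep_subset_nbc_base {α : Type*} [LinearOrder α] (M : Matroid α) [M.Finite]
    (I : Set α) (hI : M.IsNBCIndep I) :
    ∃ B, M.IsNBCBase B ∧ I ⊆ B := by
  classical
  have hE : M.E.Finite := M.ground_finite
  -- the collection of (finite) bases containing `I`
  set S : Set (Finset α) := {B | M.IsBase (↑B : Set α) ∧ I ⊆ ↑B} with hS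
  have hSfin : S.Finite := by
    refine (hE.toFinset.powerset : Finset (Finset α)).finite_toSet.subset ?_
    rintro B ⟨hB, -⟩
    simp only [Finset.coe_powerset, Set.mem_preimage, Set.mem_powerset_iff]
    intro x hx
    simpa using hE.mem_toFinset.2 (hB.subset_ground hx)
  have hSne : S.Nonempty := by
    obtain ⟨B0, hB0, hIB0⟩ := hI.1.exists_isBase_superset
    have hB0fin : B0.Finite := hE.subset hB0.subset_ground
    refine ⟨hB0fin.toFinset, ?_, ?_⟩ <;> simp [hB0fin.coe_toFinset, hB0, hIB0]
  obtain ⟨B, hBS, hBmin⟩ :=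
    Set.Finite.exists_minimalFor (fun B => toColex B) S hSfin hSne
  refine ⟨↑B, ⟨hBS.1, ?_⟩, hBS.2⟩
  rintro Bc ⟨C, e, hC, heC, hemin, rfl⟩ hsub
  -- `e ∉ B`, since otherwise the circuit `C` would lie in the base `B`
  have heB : e ∉ (B : Set α) := by
    intro heB
    have hCB : C ⊆ (B : Set α) := by
      intro x hx
      rcases eq_or_ne x e with rfl | hne
      · exact heB
      · exact hsub ⟨hx, hne⟩
    exact hC.2.1 (hBS.1.indep.subset hCB)
  -- find `f ∈ C \ {e}` not in `I`
  have hnsubI : ¬ C \ {e} ⊆ I := hI.2 _ ⟨C, e, hC, heC, hemin, rfl⟩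
  obtain ⟨f, hfC, hfI⟩ := Set.not_subset.1 hnsubI
  have hfB : f ∈ (B : Set α) := hsub hfC
  have hef : e < f := lt_of_le_of_ne (hemin f hfC.1) (Ne.symm hfC.2)
  have hfe : f ≠ e := hfC.2
  -- the exchanged set is independent
  have hBdf : M.Indep ((B : Set α) \ {f}) := hBS.1.indep.subset Set.diff_subset
  have hind : M.Indep (insert e ((B : Set α) \ {f})) := by
    by_contra hdep
    have heE : e ∈ M.E := hC.1 heC
    have heBf : e ∉ (B : Set α) \ {f} := fun h => heB h.1
    have hecl : e ∈ M.closure ((B : Set α) \ {f}) := by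
      have : M.Dep (insert e ((B : Set α) \ {f})) := by
        rw [← Matroid.not_indep_iff
          (Set.insert_subset heE (Set.diff_subset.trans hBS.1.subset_ground))]
        exact hdep
      exact ((hBdf.insert_dep_iff).1 this).1
    -- `f` is in the closure of `C \ {f}`
    have hfcl : f ∈ M.closure (C \ {f}) := by
      have hCf : M.Indep (C \ {f}) := hC.2.2 f hfC.1
      have : M.Dep (insert f (C \ {f})) := by
        have hCeq : insert f (C \ {f}) = C := by
          rw [Set.insert_diff_singleton, Set.insert_eq_of_mem hfC.1]
        rw [hCeq, ← Matroid.not_indep_iff hC.1]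
        exact hC.2.1
      exact ((hCf.insert_dep_iff).1 this).1
    have hCsub : C \ {f} ⊆ insert e ((B : Set α) \ {f}) := by
      rintro x ⟨hxC, hxf⟩
      rcases eq_or_ne x e with rfl | hne
      · exact Set.mem_insert _ _
      · exact Set.mem_insert_of_mem _ ⟨hsub ⟨hxC, hne⟩, hxf⟩
    have hfcl' : f ∈ M.closure ((B : Set α) \ {f}) := by
      have h1 : f ∈ M.closure (insert e ((B : Set α) \ {f})) :=
        M.closure_subset_closure hCsub hfcl
      rwa [Matroid.closure_insert_eq_of_mem_closure hecl] at h1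
    have : M.Dep (insert f ((B : Set α) \ {f})) :=
      (hBdf.insert_dep_iff).2 ⟨hfcl', fun h => h.2 rfl⟩
    rw [Set.insert_diff_singleton, Set.insert_eq_of_mem hfB] at this
    exact this.1 hBS.1.indep
  -- the exchanged set is a base
  have hbase : M.IsBase (insert e ((B : Set α) \ {f})) :=
    hBS.1.exchange_isBase_of_indep heB hind
  -- as a Finset
  set B' : Finset α := insert e (B.erase f) with hB'
  have hB'coe : (B' : Set α) = insert e ((B : Set α) \ {f}) := by
    simp [hB', Finset.coe_insert, Finset.coe_erase]
  have hB'S : B' ∈ S := by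
    refine ⟨by rw [hB'coe]; exact hbase, ?_⟩
    rw [hB'coe]
    intro x hx
    exact Set.mem_insert_of_mem _ ⟨hBS.2 hx, fun h => hfI (h ▸ hx)⟩
  -- `B'` is colex-smaller than `B`
  have hlt : toColex B' < toColex B := by
    rw [Finset.Colex.toColex_lt_toColex_iff_exists_forall_lt]
    refine ⟨f, hfB, ?_, ?_⟩
    · simp [hB', hfe]
    · intro b hb hbB
      have : b = e := by
        rcases Finset.mem_insert.1 hb with rfl | h
        · rfl
        · exact absurd (Finset.mem_of_mem_erase h) hbB
      rw [this]; exact hef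
  exact absurd (hBmin hB'S hlt.le) (not_le.2 hlt)
end

section
/- Given a graph G = (V, E) with vertex weights w : V → R≥0, construct G' by adding a new vertex z and edges e_v = {z, v} for all v ∈ V, and order the edges so that every edge of E precedes every edge e_v. Then for any k, G has an independent set of weight at least k if and only if the graphic matroid of G' has an NBC basis B (with respect to this order) of weight at least k, where edge e_v has weight w(v) and edges of E have weight 0. -/
set_option linter.unusedSectionVars false
set_option maxHeartbeats 1000000

open SimpleGraph

section NBC

variable {W : Type*} [DecidableEq W]

def IsForestIn (H : SimpleGraph W) (S : Finset (Sym2 W)) : Prop :=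
  ↑S ⊆ H.edgeSet ∧ (SimpleGraph.fromEdgeSet (↑S : Set (Sym2 W))).IsAcyclic

def IsGraphCircuit (H : SimpleGraph W) (C : Finset (Sym2 W)) : Prop :=
  ↑C ⊆ H.edgeSet ∧ ¬ (SimpleGraph.fromEdgeSet (↑C : Set (Sym2 W))).IsAcyclic ∧
    ∀ e ∈ C, (SimpleGraph.fromEdgeSet (↑(C.erase e) : Set (Sym2 W))).IsAcyclic

def IsGraphBasis (H : SimpleGraph W) (B : Finset (Sym2 W)) : Prop :=
  IsForestIn H B ∧ ∀ e ∈ H.edgeSet, e ∉ B → ¬ IsForestIn H (insert e B)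

def HasBrokenCircuit (H : SimpleGraph W) (ord : Sym2 W → ℕ) (S : Finset (Sym2 W)) : Prop :=
  ∃ C e, IsGraphCircuit H C ∧ e ∈ C ∧ (∀ f ∈ C, f ≠ e → ord e < ord f) ∧ C.erase e ⊆ S

def IsNBCBasis (H : SimpleGraph W) (ord : Sym2 W → ℕ) (B : Finset (Sym2 W)) : Prop :=
  IsGraphBasis H B ∧ ¬ HasBrokenCircuit H ord B

end NBC

/-- The cone construction: add a new vertex `z = Sum.inr ()` to `G` and connect it to every
vertex of `G` by the edge `e_v = {z, v}`. -/
def coneGraph {V : Type*} (G : SimpleGraph V) : SimpleGraph (V ⊕ Unit) :=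
  G.map (⟨Sum.inl, Sum.inl_injective⟩ : V ↪ V ⊕ Unit) ⊔
    SimpleGraph.fromEdgeSet {x | ∃ v : V, x = s(Sum.inr (), Sum.inl v)}

/-- The edge `e_v = {z, v}`. -/
def coneEdge {V : Type*} (v : V) : Sym2 (V ⊕ Unit) := s(Sum.inr (), Sum.inl v)

section Helpers
variable {W : Type*} [DecidableEq W]

private abbrev gr (S : Finset (Sym2 W)) : SimpleGraph W :=
  SimpleGraph.fromEdgeSet (↑S : Set (Sym2 W))

private lemma gr_mono {S T : Finset (Sym2 W)} (h : S ⊆ T) : gr S ≤ gr T :=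
  SimpleGraph.fromEdgeSet_mono (by exact_mod_cast h)

private lemma acyclic_anti {G H : SimpleGraph W} (h : G ≤ H) (hH : H.IsAcyclic) : G.IsAcyclic :=
  fun _ c hc => hH (c.mapLe h) ((SimpleGraph.Walk.mapLe_isCycle h).mpr hc)

private lemma acyclic_subset {S T : Finset (Sym2 W)} (h : S ⊆ T) (hT : (gr T).IsAcyclic) :
    (gr S).IsAcyclic :=
  acyclic_anti (gr_mono h) hT

private lemma not_acyclic_erase {S : Finset (Sym2 W)} {e : Sym2 W} {u : W} {c : (gr S).Walk u u}
    (hc : c.IsCycle) (he : e ∉ c.edges) : ¬ (gr (S.erase e)).IsAcyclic := by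
  have hsub : ∀ f ∈ c.edges, f ∈ (gr (S.erase e)).edgeSet := by
    intro f hf
    have h1 := c.edges_subset_edgeSet hf
    rw [SimpleGraph.edgeSet_fromEdgeSet] at h1 ⊢
    exact ⟨Finset.mem_coe.2 (Finset.mem_erase.2 ⟨fun h => he (h ▸ hf), Finset.mem_coe.1 h1.1⟩), h1.2⟩
  exact fun ha => ha _ (hc.transfer hsub)

private lemma sdiff_le_gr_erase {S : Finset (Sym2 W)} {e : Sym2 W} :
    gr S \ SimpleGraph.fromEdgeSet {e} ≤ gr (S.erase e) := by
  intro a b hab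
  rw [SimpleGraph.sdiff_adj, SimpleGraph.fromEdgeSet_adj, SimpleGraph.fromEdgeSet_adj] at hab
  rw [SimpleGraph.fromEdgeSet_adj]
  obtain ⟨⟨hm, hne⟩, hno⟩ := hab
  have : s(a, b) ≠ e := fun h => hno ⟨h ▸ Set.mem_singleton _, hne⟩
  exact ⟨Finset.mem_coe.2 (Finset.mem_erase.2 ⟨this, Finset.mem_coe.1 hm⟩), hne⟩

private lemma reach_of_cycle_mem {S : Finset (Sym2 W)} {x y u : W} {c : (gr S).Walk u u}
    (hc : c.IsCycle) (he : s(x, y) ∈ c.edges) : (gr (S.erase s(x, y))).Reachable x y := by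
  have h := (SimpleGraph.adj_and_reachable_delete_edges_iff_exists_cycle.2 ⟨u, c, hc, he⟩).2
  exact h.mono sdiff_le_gr_erase

private lemma exists_ends_of_circuit_edge {S : Finset (Sym2 W)} {e : Sym2 W}
    (hS : ¬ (gr S).IsAcyclic) (hrest : (gr (S.erase e)).IsAcyclic) :
    ∃ x y, x ≠ y ∧ e = s(x, y) ∧ (gr (S.erase e)).Reachable x y := by
  simp only [SimpleGraph.IsAcyclic, not_forall] at hS
  obtain ⟨u, c, hc⟩ := hS
  rw [not_not] at hc
  have hmem : e ∈ c.edges := by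
    by_contra h
    exact not_acyclic_erase hc h hrest
  induction e using Sym2.ind with
  | _ x y =>
    have hxy : x ≠ y := by
      have h2 := c.edges_subset_edgeSet hmem
      rw [SimpleGraph.edgeSet_fromEdgeSet] at h2
      exact fun h => h2.2 (by simp [h, Sym2.isDiag_iff_proj_eq])
    exact ⟨x, y, hxy, rfl, reach_of_cycle_mem hc hmem⟩

private lemma not_acyclic_insert_of_reach {S : Finset (Sym2 W)} {x y : W}
    (hxy : x ≠ y) (he : s(x, y) ∉ S) (h : (gr S).Reachable x y) :
    ¬ (gr (insert s(x, y) S)).IsAcyclic := by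
  have hadj : (gr (insert s(x, y) S)).Adj x y := by
    rw [SimpleGraph.fromEdgeSet_adj]
    exact ⟨by simp, hxy⟩
  have hle : gr S ≤ gr (insert s(x, y) S) \ SimpleGraph.fromEdgeSet {s(x, y)} := by
    intro a b hab
    rw [SimpleGraph.fromEdgeSet_adj] at hab
    rw [SimpleGraph.sdiff_adj, SimpleGraph.fromEdgeSet_adj, SimpleGraph.fromEdgeSet_adj]
    refine ⟨⟨by simp [Finset.mem_coe.1 hab.1], hab.2⟩, ?_⟩
    rintro ⟨hmem, -⟩
    exact he (Set.mem_singleton_iff.1 hmem ▸ Finset.mem_coe.1 hab.1)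
  obtain ⟨u, c, hc, -⟩ :=
    SimpleGraph.adj_and_reachable_delete_edges_iff_exists_cycle.1 ⟨hadj, h.mono hle⟩
  exact fun ha => ha _ hc

private lemma acyclic_insert_of_not_reach {S : Finset (Sym2 W)} {x y : W}
    (hS : (gr S).IsAcyclic) (h : ¬ (gr S).Reachable x y) :
    (gr (insert s(x, y) S)).IsAcyclic := by
  rcases eq_or_ne x y with rfl | hxy
  · exact absurd (SimpleGraph.Reachable.refl x) h
  have he : s(x, y) ∉ S := by
    intro hmem
    exact h (SimpleGraph.Adj.reachable
      ((SimpleGraph.fromEdgeSet_adj _).2 ⟨Finset.mem_coe.2 hmem, hxy⟩))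
  by_contra hna
  simp only [SimpleGraph.IsAcyclic, not_forall] at hna
  obtain ⟨u, c, hc⟩ := hna
  rw [not_not] at hc
  by_cases hmem : s(x, y) ∈ c.edges
  · have h2 := reach_of_cycle_mem hc hmem
    rw [Finset.erase_insert he] at h2
    exact h h2
  · have h2 := not_acyclic_erase hc hmem
    rw [Finset.erase_insert he] at h2
    exact h2 hS

private lemma reach_of_reach_insert {S : Finset (Sym2 W)} {a b x y : W}
    (hab : (gr S).Reachable a b) (h : (gr (insert s(a, b) S)).Reachable x y) :
    (gr S).Reachable x y := by
  obtain ⟨w⟩ := h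
  induction w with
  | nil => exact SimpleGraph.Reachable.refl _
  | @cons p q r hadj tail ih =>
    refine SimpleGraph.Reachable.trans ?_ ih
    rw [SimpleGraph.fromEdgeSet_adj] at hadj
    obtain ⟨hm, hne⟩ := hadj
    rcases Finset.mem_insert.1 (Finset.mem_coe.1 hm) with heq | hSmem
    · rw [Sym2.eq_iff] at heq
      rcases heq with ⟨rfl, rfl⟩ | ⟨rfl, rfl⟩
      · exact hab
      · exact hab.symm
    · exact SimpleGraph.Adj.reachable
        ((SimpleGraph.fromEdgeSet_adj _).2 ⟨Finset.mem_coe.2 hSmem, hne⟩)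

private lemma star_reach {S : Finset (Sym2 W)} {z : W} (hz : ∀ e ∈ S, z ∈ e) {x y : W}
    (h : (gr S).Reachable x y) :
    x = y ∨ ((x = z ∨ (gr S).Adj z x) ∧ (y = z ∨ (gr S).Adj z y)) := by
  obtain ⟨w⟩ := h
  induction w with
  | nil => exact Or.inl rfl
  | @cons p q r hadj tail ih =>
    right
    have hm : s(p, q) ∈ S ∧ p ≠ q := by
      rw [SimpleGraph.fromEdgeSet_adj] at hadj
      exact ⟨Finset.mem_coe.1 hadj.1, hadj.2⟩
    have hzin : z = p ∨ z = q := Sym2.mem_iff.1 (hz _ hm.1)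
    have hadj' : (gr S).Adj p q := (SimpleGraph.fromEdgeSet_adj _).2 ⟨Finset.mem_coe.2 hm.1, hm.2⟩
    constructor
    · rcases hzin with rfl | rfl
      · exact Or.inl rfl
      · exact Or.inr hadj'.symm
    · rcases ih with rfl | hy
      · rcases hzin with rfl | rfl
        · exact Or.inr hadj'
        · exact Or.inl rfl
      · exact hy.2

private lemma star_acyclic {S : Finset (Sym2 W)} {z : W} (hz : ∀ e ∈ S, z ∈ e) :
    (gr S).IsAcyclic := by
  rw [SimpleGraph.isAcyclic_iff_forall_edge_isBridge]
  intro e he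
  rw [SimpleGraph.edgeSet_fromEdgeSet] at he
  obtain ⟨hmem, hnd⟩ := he
  have hmem' : e ∈ S := Finset.mem_coe.1 hmem
  have core : ∀ x : W, s(z, x) ∈ S → z ≠ x → (gr S).IsBridge s(z, x) := by
    intro x hx hzx
    rw [SimpleGraph.isBridge_iff]
    intro hreach
    have hreach' := hreach.mono (sdiff_le_gr_erase (e := s(z, x)))
    have hz' : ∀ f ∈ S.erase s(z, x), z ∈ f := fun f hf => hz f (Finset.mem_of_mem_erase hf)
    rcases star_reach hz' hreach' with heq | ⟨-, hx'⟩
    · exact hzx heq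
    · rcases hx' with heq | hadj
      · exact hzx heq.symm
      · rw [SimpleGraph.fromEdgeSet_adj] at hadj
        exact Finset.notMem_erase s(z, x) S (Finset.mem_coe.1 hadj.1)
  induction e using Sym2.ind with
  | _ a b =>
    have hnd' : a ≠ b := fun h => hnd (by simp [h, Sym2.isDiag_iff_proj_eq])
    rcases Sym2.mem_iff.1 (hz _ hmem') with rfl | rfl
    · exact core b hmem' hnd'
    · rw [Sym2.eq_swap]
      exact core a (by rwa [Sym2.eq_swap]) hnd'.symm

private lemma exists_circuit_subset' : ∀ (n : ℕ) (S : Finset (Sym2 W)), S.card ≤ n →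
    ¬ (gr S).IsAcyclic →
    ∃ C, C ⊆ S ∧ ¬ (gr C).IsAcyclic ∧ ∀ e ∈ C, (gr (C.erase e)).IsAcyclic := by
  intro n
  induction n with
  | zero =>
    intro S hcard hS
    rw [Nat.le_zero, Finset.card_eq_zero] at hcard
    subst hcard
    refine absurd ?_ hS
    have hg : gr (∅ : Finset (Sym2 W)) = ⊥ := by
      simp only [gr, Finset.coe_empty, SimpleGraph.fromEdgeSet_empty]
    rw [hg]
    exact SimpleGraph.isAcyclic_bot
  | succ n ih =>
    intro S hcard hS
    by_cases h : ∀ e ∈ S, (gr (S.erase e)).IsAcyclic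
    · exact ⟨S, Finset.Subset.refl _, hS, h⟩
    · push_neg at h
      obtain ⟨e, he, hne⟩ := h
      obtain ⟨C, hCsub, hC⟩ := ih (S.erase e)
        (by have := Finset.card_erase_lt_of_mem he; omega) hne
      exact ⟨C, hCsub.trans (Finset.erase_subset _ _), hC⟩

private lemma exists_circuit_subset {S : Finset (Sym2 W)} (hS : ¬ (gr S).IsAcyclic) :
    ∃ C, C ⊆ S ∧ ¬ (gr C).IsAcyclic ∧ ∀ e ∈ C, (gr (C.erase e)).IsAcyclic :=
  exists_circuit_subset' S.card S le_rfl hS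

end Helpers

section ConeLemmas
variable {V : Type*} {G : SimpleGraph V}

private lemma coneEdge_mem_edgeSet (v : V) : coneEdge v ∈ (coneGraph G).edgeSet := by
  rw [coneEdge, SimpleGraph.mem_edgeSet]
  exact Or.inr ((SimpleGraph.fromEdgeSet_adj _).2 ⟨⟨v, rfl⟩, by simp⟩)

private lemma inl_edge_mem_edgeSet {a b : V} :
    s(Sum.inl a, Sum.inl b) ∈ (coneGraph G).edgeSet ↔ G.Adj a b := by
  rw [SimpleGraph.mem_edgeSet]
  constructor
  · rintro (h | h)
    · rw [SimpleGraph.map_adj] at h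
      obtain ⟨a', b', hadj, ha, hb⟩ := h
      simp only [Function.Embedding.coeFn_mk, Sum.inl.injEq] at ha hb
      rwa [ha, hb] at hadj
    · rw [SimpleGraph.fromEdgeSet_adj] at h
      obtain ⟨⟨v, hv⟩, -⟩ := h
      rw [Sym2.eq_iff] at hv
      rcases hv with ⟨h1, -⟩ | ⟨-, h2⟩ <;> simp at *
  · intro h
    exact Or.inl (SimpleGraph.map_adj_apply.2 h)

private lemma cone_edge_cases {e : Sym2 (V ⊕ Unit)} (he : e ∈ (coneGraph G).edgeSet) :
    (∃ a b, G.Adj a b ∧ e = s(Sum.inl a, Sum.inl b)) ∨ (∃ v, e = coneEdge v) := by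
  induction e using Sym2.ind with
  | _ x y =>
    rw [SimpleGraph.mem_edgeSet] at he
    rcases he with h | h
    · rw [SimpleGraph.map_adj] at h
      obtain ⟨a, b, hadj, ha, hb⟩ := h
      simp only [Function.Embedding.coeFn_mk] at ha hb
      exact Or.inl ⟨a, b, hadj, by rw [ha, hb]⟩
    · rw [SimpleGraph.fromEdgeSet_adj] at h
      obtain ⟨⟨v, hv⟩, -⟩ := h
      rcases Sym2.eq_iff.1 hv with ⟨h1, h2⟩ | ⟨h1, h2⟩
      · exact Or.inr ⟨v, by rw [h1, h2]; rfl⟩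
      · exact Or.inr ⟨v, by rw [coneEdge, h1, h2, Sym2.eq_swap]⟩

private lemma coneEdge_inj {u v : V} (h : coneEdge u = coneEdge v) : u = v := by
  rw [coneEdge, coneEdge, Sym2.eq_iff] at h
  rcases h with ⟨-, h⟩ | ⟨h, -⟩ <;> simp at h
  exact h

private lemma coneEdge_ne_inl {u a b : V} : coneEdge u ≠ s(Sum.inl a, Sum.inl b) := by
  rw [coneEdge, Ne, Sym2.eq_iff]
  rintro (⟨h, -⟩ | ⟨h, -⟩) <;> exact absurd h (by simp)

private lemma mem_coneEdge (u : V) : (Sum.inr () : V ⊕ Unit) ∈ coneEdge u := by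
  rw [coneEdge]; simp

end ConeLemmas

/-- Reduction from MAX-INDEP-SET to max-weight NBC basis: for a graph `G` with nonnegative
vertex weights `w`, and any edge ordering of `G'` (the cone over `G`) in which every edge of
`G` precedes every edge `e_v`, `G` has an independent set of weight `≥ k` iff the graphic
matroid of `G'` has an NBC basis of weight `≥ k`, where edge `e_v` weighs `w v` and edges of
`G` weigh `0`. -/
theorem indep_set_iff_nbc_basis_weight {V : Type*} [Fintype V] [DecidableEq V]
    (G : SimpleGraph V) (w : V → ℝ) (hw : ∀ v, 0 ≤ w v) (k : ℝ)
    (ord : Sym2 (V ⊕ Unit) → ℕ) (hordinj : Function.Injective ord)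
    (hord : ∀ a b : V, G.Adj a b → ∀ v : V, ord s(Sum.inl a, Sum.inl b) < ord (coneEdge v)) :
    (∃ I : Finset V, (∀ u ∈ I, ∀ v ∈ I, u ≠ v → ¬ G.Adj u v) ∧ k ≤ ∑ v ∈ I, w v) ↔
    (∃ B : Finset (Sym2 (V ⊕ Unit)), IsNBCBasis (coneGraph G) ord B ∧
      k ≤ ∑ v : V, if coneEdge v ∈ B then w v else 0) := by
  classical
  constructor
  · rintro ⟨I, hI, hIk⟩
    -- extend I to a maximal independent set I'
    obtain ⟨I', hI'mem, hI'max⟩ := Finset.exists_max_image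
      ((Finset.univ : Finset (Finset V)).filter
        (fun J => (∀ x ∈ J, ∀ y ∈ J, x ≠ y → ¬ G.Adj x y) ∧ I ⊆ J)) Finset.card
      ⟨I, by simp only [Finset.mem_filter]; exact ⟨Finset.mem_univ _, hI, Finset.Subset.refl I⟩⟩
    rw [Finset.mem_filter] at hI'mem
    obtain ⟨-, hI'ind, hII'⟩ := hI'mem
    have hdom : ∀ u, u ∉ I' → ∃ v ∈ I', G.Adj u v := by
      intro u hu
      by_contra hno
      push_neg at hno
      have hmem : (insert u I') ∈ (Finset.univ : Finset (Finset V)).filter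
          (fun J => (∀ x ∈ J, ∀ y ∈ J, x ≠ y → ¬ G.Adj x y) ∧ I ⊆ J) := by
        rw [Finset.mem_filter]
        refine ⟨Finset.mem_univ _, ?_, hII'.trans (Finset.subset_insert _ _)⟩
        intro x hx y hy hxy
        rcases Finset.mem_insert.1 hx with rfl | hx'
        · rcases Finset.mem_insert.1 hy with rfl | hy'
          · exact absurd rfl hxy
          · exact hno y hy'
        · rcases Finset.mem_insert.1 hy with rfl | hy'
          · exact fun hadj => hno x hx' hadj.symm
          · exact hI'ind x hx' y hy' hxy
      have hcard := hI'max _ hmem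
      rw [Finset.card_insert_of_notMem hu] at hcard
      omega
    -- the family Q of constrained forests
    set Q : Finset (Sym2 (V ⊕ Unit)) → Prop := fun B =>
      (↑B ⊆ (coneGraph G).edgeSet) ∧
      (SimpleGraph.fromEdgeSet (↑B : Set (Sym2 (V ⊕ Unit)))).IsAcyclic ∧
      (∀ v : V, coneEdge v ∈ B ↔ v ∈ I') with hQ
    have hQstar : Q (I'.image coneEdge) := by
      refine ⟨?_, ?_, ?_⟩
      · intro e he
        rw [Finset.coe_image] at he
        obtain ⟨v, -, rfl⟩ := he
        exact coneEdge_mem_edgeSet v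
      · exact star_acyclic (z := (Sum.inr () : V ⊕ Unit)) (by
          intro e he
          obtain ⟨v, -, rfl⟩ := Finset.mem_image.1 he
          exact mem_coneEdge v)
      · intro v
        rw [Finset.mem_image]
        constructor
        · rintro ⟨v', hv', heq⟩
          rwa [← coneEdge_inj heq]
        · exact fun hv => ⟨v, hv, rfl⟩
    obtain ⟨B0, hB0mem, hB0max⟩ := Finset.exists_max_image
      ((Finset.univ : Finset (Finset (Sym2 (V ⊕ Unit)))).filter Q) Finset.card
      ⟨I'.image coneEdge, by rw [Finset.mem_filter]; exact ⟨Finset.mem_univ _, hQstar⟩⟩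
    rw [Finset.mem_filter] at hB0mem
    obtain ⟨-, hB0sub, hB0ac, hB0cone⟩ := hB0mem
    have haddG : ∀ a b : V, G.Adj a b → s(Sum.inl a, Sum.inl b) ∉ B0 →
        ¬ (SimpleGraph.fromEdgeSet
            (↑(insert s(Sum.inl a, Sum.inl b) B0) : Set (Sym2 (V ⊕ Unit)))).IsAcyclic := by
      intro a b hab hnm hac
      have hmem : insert s(Sum.inl a, Sum.inl b) B0 ∈
          (Finset.univ : Finset (Finset (Sym2 (V ⊕ Unit)))).filter Q := by
        rw [Finset.mem_filter]
        refine ⟨Finset.mem_univ _, ?_, hac, ?_⟩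
        · rw [Finset.coe_insert, Set.insert_subset_iff]
          exact ⟨inl_edge_mem_edgeSet.2 hab, hB0sub⟩
        · intro v
          rw [Finset.mem_insert]
          constructor
          · rintro (h | h)
            · exact absurd h coneEdge_ne_inl
            · exact (hB0cone v).1 h
          · exact fun hv => Or.inr ((hB0cone v).2 hv)
      have hcard := hB0max _ hmem
      rw [Finset.card_insert_of_notMem hnm] at hcard
      omega
    have hreachB0 : ∀ a b : V, G.Adj a b →
        (SimpleGraph.fromEdgeSet (↑B0 : Set (Sym2 (V ⊕ Unit)))).Reachable
          (Sum.inl a) (Sum.inl b) := by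
      intro a b hab
      by_cases hm : s(Sum.inl a, Sum.inl b) ∈ B0
      · exact SimpleGraph.Adj.reachable
          ((SimpleGraph.fromEdgeSet_adj _).2 ⟨Finset.mem_coe.2 hm, by simp [hab.ne]⟩)
      · by_contra hnr
        exact haddG a b hab hm (acyclic_insert_of_not_reach hB0ac hnr)
    have hB0basis : ∀ e ∈ (coneGraph G).edgeSet, e ∉ B0 →
        ¬ IsForestIn (coneGraph G) (insert e B0) := by
      intro e he heB0 hforest
      obtain ⟨-, hac'⟩ := hforest
      rcases cone_edge_cases he with ⟨a, b, hab, rfl⟩ | ⟨u, rfl⟩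
      · exact haddG a b hab heB0 hac'
      · have hu : u ∉ I' := fun h => heB0 ((hB0cone u).2 h)
        obtain ⟨v, hv, hadj⟩ := hdom u hu
        have hzv : (SimpleGraph.fromEdgeSet (↑B0 : Set (Sym2 (V ⊕ Unit)))).Adj
            (Sum.inr ()) (Sum.inl v) :=
          (SimpleGraph.fromEdgeSet_adj _).2
            ⟨Finset.mem_coe.2 ((hB0cone v).2 hv), by simp⟩
        have hreach : (SimpleGraph.fromEdgeSet (↑B0 : Set (Sym2 (V ⊕ Unit)))).Reachable
            (Sum.inr ()) (Sum.inl u) :=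
          hzv.reachable.trans (hreachB0 u v hadj).symm
        exact not_acyclic_insert_of_reach (by simp) heB0 hreach hac'
    -- pick a minimum-weight member of the family P
    set φ : Finset (Sym2 (V ⊕ Unit)) → ℕ := fun B => ∑ e ∈ B, 2 ^ (ord e) with hφ
    set P : Finset (Sym2 (V ⊕ Unit)) → Prop := fun B =>
      (↑B ⊆ (coneGraph G).edgeSet) ∧
      (SimpleGraph.fromEdgeSet (↑B : Set (Sym2 (V ⊕ Unit)))).IsAcyclic ∧
      (∀ v : V, coneEdge v ∈ B ↔ v ∈ I') ∧
      (∀ e ∈ (coneGraph G).edgeSet, e ∉ B → ¬ IsForestIn (coneGraph G) (insert e B)) with hP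
    obtain ⟨B, hBmem, hBmin⟩ := Finset.exists_min_image
      ((Finset.univ : Finset (Finset (Sym2 (V ⊕ Unit)))).filter P) φ
      ⟨B0, by rw [Finset.mem_filter]; exact ⟨Finset.mem_univ _, hB0sub, hB0ac, hB0cone, hB0basis⟩⟩
    rw [Finset.mem_filter] at hBmem
    obtain ⟨-, hBsub, hBac, hBcone, hBmax⟩ := hBmem
    have hBreach : ∀ x y : V ⊕ Unit, x ≠ y → s(x, y) ∈ (coneGraph G).edgeSet →
        s(x, y) ∉ B →
        (SimpleGraph.fromEdgeSet (↑B : Set (Sym2 (V ⊕ Unit)))).Reachable x y := by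
      intro x y hxy he heB
      by_contra hnr
      exact hBmax _ he heB
        ⟨by rw [Finset.coe_insert, Set.insert_subset_iff]; exact ⟨he, hBsub⟩,
          acyclic_insert_of_not_reach hBac hnr⟩
    -- B is an NBC basis
    have hNBC : ¬ HasBrokenCircuit (coneGraph G) ord B := by
      rintro ⟨C, f, ⟨hCsub, hCnac, hCer⟩, hfC, hfmin, hCB⟩
      have hfB : f ∉ B := by
        intro hfB
        refine hCnac (acyclic_subset ?_ hBac)
        intro t ht
        by_cases htf : t = f
        · exact htf ▸ hfB
        · exact hCB (Finset.mem_erase.2 ⟨htf, ht⟩)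
      obtain ⟨x, y, hxy, hfeq, hRf⟩ := exists_ends_of_circuit_edge hCnac (hCer f hfC)
      rcases cone_edge_cases (hCsub hfC) with ⟨a, b, hab, rfl⟩ | ⟨u, rfl⟩
      · -- f is a G-edge
        have hRab : (SimpleGraph.fromEdgeSet
            (↑(C.erase s(Sum.inl a, Sum.inl b)) : Set (Sym2 (V ⊕ Unit)))).Reachable
            (Sum.inl a) (Sum.inl b) := by
          rcases Sym2.eq_iff.1 hfeq with ⟨rfl, rfl⟩ | ⟨rfl, rfl⟩
          · exact hRf
          · exact hRf.symm
        by_cases hall : ∀ g ∈ C.erase s(Sum.inl a, Sum.inl b), (Sum.inr () : V ⊕ Unit) ∈ g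
        · rcases star_reach hall hRab with heq | ⟨ha', hb'⟩
          · exact hab.ne (by simpa using heq)
          · have haI : a ∈ I' := by
              rcases ha' with heq | hadj
              · exact absurd heq (by simp)
              · rw [SimpleGraph.fromEdgeSet_adj] at hadj
                exact (hBcone a).1 (hCB (Finset.mem_coe.1 hadj.1))
            have hbI : b ∈ I' := by
              rcases hb' with heq | hadj
              · exact absurd heq (by simp)
              · rw [SimpleGraph.fromEdgeSet_adj] at hadj
                exact (hBcone b).1 (hCB (Finset.mem_coe.1 hadj.1))
            exact hI'ind a haI b hbI hab.ne hab
        · push_neg at hall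
          obtain ⟨g, hgCf, hgz⟩ := hall
          have hgC : g ∈ C := Finset.mem_of_mem_erase hgCf
          rcases cone_edge_cases (hCsub hgC) with ⟨c, d, hcd, rfl⟩ | ⟨v, rfl⟩
          swap
          · exact hgz (mem_coneEdge v)
          have hgB : s(Sum.inl c, Sum.inl d) ∈ B := hCB hgCf
          have hfg : ord s(Sum.inl a, Sum.inl b) < ord s(Sum.inl c, Sum.inl d) :=
            hfmin _ hgC (Finset.ne_of_mem_erase hgCf)
          -- the exchanged basis
          set f' : Sym2 (V ⊕ Unit) := s(Sum.inl a, Sum.inl b) with hf'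
          set g' : Sym2 (V ⊕ Unit) := s(Sum.inl c, Sum.inl d) with hg'
          set B' : Finset (Sym2 (V ⊕ Unit)) := insert f' (B.erase g') with hB'
          obtain ⟨x2, y2, hxy2, hgeq, hRg⟩ := exists_ends_of_circuit_edge hCnac (hCer g' hgC)
          have hRcd : (SimpleGraph.fromEdgeSet
              (↑(C.erase g') : Set (Sym2 (V ⊕ Unit)))).Reachable (Sum.inl c) (Sum.inl d) := by
            rcases Sym2.eq_iff.1 hgeq with ⟨rfl, rfl⟩ | ⟨rfl, rfl⟩
            · exact hRg
            · exact hRg.symm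
          have hCgB' : C.erase g' ⊆ B' := by
            intro t ht
            obtain ⟨htg, htC⟩ := Finset.mem_erase.1 ht
            by_cases htf : t = f'
            · exact htf ▸ Finset.mem_insert_self _ _
            · exact Finset.mem_insert_of_mem
                (Finset.mem_erase.2 ⟨htg, hCB (Finset.mem_erase.2 ⟨htf, htC⟩)⟩)
          have hRcdB' : (SimpleGraph.fromEdgeSet
              (↑B' : Set (Sym2 (V ⊕ Unit)))).Reachable (Sum.inl c) (Sum.inl d) :=
            hRcd.mono (gr_mono hCgB')
          have hBegAc : (SimpleGraph.fromEdgeSet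
              (↑(B.erase g') : Set (Sym2 (V ⊕ Unit)))).IsAcyclic :=
            acyclic_subset (Finset.erase_subset _ _) hBac
          have hB'ac : (SimpleGraph.fromEdgeSet (↑B' : Set (Sym2 (V ⊕ Unit)))).IsAcyclic := by
            by_contra hna
            have hRab2 : (SimpleGraph.fromEdgeSet
                (↑(B.erase g') : Set (Sym2 (V ⊕ Unit)))).Reachable
                (Sum.inl a) (Sum.inl b) := by
              by_contra hnr
              exact hna (acyclic_insert_of_not_reach hBegAc hnr)
            have hRcd2 := reach_of_reach_insert hRab2 hRcdB'
            have hnot := not_acyclic_insert_of_reach (by simp [hcd.ne])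
              (Finset.notMem_erase _ _) hRcd2
            rw [Finset.insert_erase hgB] at hnot
            exact hnot hBac
          have htrans : ∀ p q : V ⊕ Unit,
              (SimpleGraph.fromEdgeSet (↑B : Set (Sym2 (V ⊕ Unit)))).Reachable p q →
              (SimpleGraph.fromEdgeSet (↑B' : Set (Sym2 (V ⊕ Unit)))).Reachable p q := by
            intro p q hpq
            have hsub2 : B ⊆ insert g' B' := by
              intro t ht
              by_cases htg : t = g'
              · exact htg ▸ Finset.mem_insert_self _ _
              · exact Finset.mem_insert_of_mem
                  (Finset.mem_insert_of_mem (Finset.mem_erase.2 ⟨htg, ht⟩))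
            exact reach_of_reach_insert hRcdB' (hpq.mono (gr_mono hsub2))
          have hPB' : P B' := by
            refine ⟨?_, hB'ac, ?_, ?_⟩
            · rw [hB', Finset.coe_insert, Set.insert_subset_iff]
              exact ⟨hCsub hfC, fun t ht =>
                hBsub (Finset.mem_coe.2 (Finset.mem_of_mem_erase (Finset.mem_coe.1 ht)))⟩
            · intro v
              rw [hB', Finset.mem_insert]
              constructor
              · rintro (h | h)
                · exact absurd h coneEdge_ne_inl
                · exact (hBcone v).1 (Finset.mem_of_mem_erase h)
              · intro hv
                exact Or.inr (Finset.mem_erase.2 ⟨coneEdge_ne_inl, (hBcone v).2 hv⟩)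
            · intro e he heB' hforest
              obtain ⟨-, hac'⟩ := hforest
              by_cases heg : e = g'
              · subst heg
                exact not_acyclic_insert_of_reach (by simp [hcd.ne]) heB' hRcdB' hac'
              · have heB : e ∉ B := by
                  intro heB
                  exact heB' (Finset.mem_insert_of_mem (Finset.mem_erase.2 ⟨heg, heB⟩))
                induction e using Sym2.ind with
                | _ p q =>
                  have hpq : p ≠ q := ((SimpleGraph.mem_edgeSet (coneGraph G)).1 he).ne
                  have hR := htrans p q (hBreach p q hpq he heB)
                  exact not_acyclic_insert_of_reach hpq heB' hR hac'
          have hφlt : φ B' < φ B := by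
            have hfB' : f' ∉ B.erase g' := fun h => hfB (Finset.mem_of_mem_erase h)
            have h1 : φ B' = 2 ^ ord f' + ∑ e ∈ B.erase g', 2 ^ ord e := by
              rw [hB']
              exact Finset.sum_insert hfB'
            have h2 : (∑ e ∈ B.erase g', 2 ^ ord e) + 2 ^ ord g' = φ B :=
              Finset.sum_erase_add _ _ hgB
            have h3 : (2 : ℕ) ^ ord f' < 2 ^ ord g' :=
              Nat.pow_lt_pow_right (by norm_num) hfg
            omega
          have := hBmin B' (by rw [Finset.mem_filter]; exact ⟨Finset.mem_univ _, hPB'⟩)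
          omega
      · -- f is a cone edge : impossible since circuits contain a G-edge
        have hex : ∃ g ∈ C, (Sum.inr () : V ⊕ Unit) ∉ g := by
          by_contra hno
          push_neg at hno
          exact hCnac (star_acyclic hno)
        obtain ⟨g, hgC, hgz⟩ := hex
        rcases cone_edge_cases (hCsub hgC) with ⟨a, b, hab, rfl⟩ | ⟨v, rfl⟩
        swap
        · exact hgz (mem_coneEdge v)
        have h1 : ord (coneEdge u) < ord s(Sum.inl a, Sum.inl b) :=
          hfmin _ hgC (Ne.symm coneEdge_ne_inl)
        have h2 := hord a b hab u
        omega
    refine ⟨B, ⟨⟨⟨hBsub, hBac⟩, hBmax⟩, hNBC⟩, ?_⟩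
    have hsum : (∑ v : V, if coneEdge v ∈ B then w v else 0) = ∑ v ∈ I', w v := by
      rw [← Finset.sum_filter]
      congr 1
      ext v
      simp [hBcone v]
    rw [hsum]
    exact hIk.trans (Finset.sum_le_sum_of_subset_of_nonneg hII' (fun i _ _ => hw i))
  · rintro ⟨B, ⟨⟨⟨hBsub, hBac⟩, -⟩, hNBC⟩, hk⟩
    refine ⟨Finset.univ.filter (fun v => coneEdge v ∈ B), ?_, ?_⟩
    · intro u hu v hv huv hadj
      have hu' : coneEdge u ∈ B := (Finset.mem_filter.1 hu).2
      have hv' : coneEdge v ∈ B := (Finset.mem_filter.1 hv).2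
      apply hNBC
      set S : Finset (Sym2 (V ⊕ Unit)) :=
        {s(Sum.inl u, Sum.inl v), coneEdge u, coneEdge v} with hS
      have hSnac : ¬ (SimpleGraph.fromEdgeSet (↑S : Set (Sym2 (V ⊕ Unit)))).IsAcyclic := by
        intro hac
        have h1 : (SimpleGraph.fromEdgeSet (↑S : Set (Sym2 (V ⊕ Unit)))).Adj
            (Sum.inl u) (Sum.inl v) :=
          (SimpleGraph.fromEdgeSet_adj _).2 ⟨by simp [hS], by simp [huv]⟩
        have h2 : (SimpleGraph.fromEdgeSet (↑S : Set (Sym2 (V ⊕ Unit)))).Adj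
            (Sum.inl v) (Sum.inr ()) :=
          (SimpleGraph.fromEdgeSet_adj _).2
            ⟨by simp [hS, coneEdge, Sym2.eq_swap], by simp⟩
        have h3 : (SimpleGraph.fromEdgeSet (↑S : Set (Sym2 (V ⊕ Unit)))).Adj
            (Sum.inr ()) (Sum.inl u) :=
          (SimpleGraph.fromEdgeSet_adj _).2 ⟨by simp [hS, coneEdge], by simp⟩
        refine hac (SimpleGraph.Walk.cons h1 (SimpleGraph.Walk.cons h2
          (SimpleGraph.Walk.cons h3 SimpleGraph.Walk.nil))) ?_
        rw [SimpleGraph.Walk.isCycle_def]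
        refine ⟨?_, by simp, ?_⟩
        · rw [SimpleGraph.Walk.isTrail_def]
          simp [coneEdge, Sym2.eq_iff, huv, Ne.symm huv]
        · simp [huv, Ne.symm huv]
      obtain ⟨C, hCS, hCnac, hCer⟩ := exists_circuit_subset hSnac
      have hfC : s(Sum.inl u, Sum.inl v) ∈ C := by
        by_contra hf
        refine hCnac (star_acyclic (z := (Sum.inr () : V ⊕ Unit)) ?_)
        intro g hg
        have := hCS hg
        rw [hS] at this
        simp only [Finset.mem_insert, Finset.mem_singleton] at this
        rcases this with rfl | rfl | rfl
        · exact absurd hg hf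
        · exact mem_coneEdge u
        · exact mem_coneEdge v
      refine ⟨C, s(Sum.inl u, Sum.inl v), ⟨?_, hCnac, hCer⟩, hfC, ?_, ?_⟩
      · intro t ht
        have := hCS (Finset.mem_coe.1 ht)
        rw [hS] at this
        simp only [Finset.mem_insert, Finset.mem_singleton] at this
        rcases this with rfl | rfl | rfl
        · exact inl_edge_mem_edgeSet.2 hadj
        · exact coneEdge_mem_edgeSet u
        · exact coneEdge_mem_edgeSet v
      · intro g hgC hgne
        have := hCS hgC
        rw [hS] at this
        simp only [Finset.mem_insert, Finset.mem_singleton] at this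
        rcases this with rfl | rfl | rfl
        · exact absurd rfl hgne
        · exact hord u v hadj u
        · exact hord u v hadj v
      · intro t ht
        obtain ⟨htne, htC⟩ := Finset.mem_erase.1 ht
        have := hCS htC
        rw [hS] at this
        simp only [Finset.mem_insert, Finset.mem_singleton] at this
        rcases this with rfl | rfl | rfl
        · exact absurd rfl htne
        · exact hu'
        · exact hv'
    · rw [Finset.sum_filter]
      exact hk
end

section
/- In the construction of the reduction above, if I ⊆ V is an independent set of the graph G, then the edge set I' = {e_v : v ∈ I} in G' contains no broken circuit with respect to the ordering in which all edges of E precede all edges e_v. -/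
open SimpleGraph

lemma cycle_two_edges {W : Type*} [DecidableEq W] {H : SimpleGraph W} {u x : W} (p : H.Walk u u)
    (hp : p.IsCycle) (hx : x ∈ p.support) :
    ∃ e₁ ∈ p.edges, ∃ e₂ ∈ p.edges, e₁ ≠ e₂ ∧ x ∈ e₁ ∧ x ∈ e₂ := by
  have hp' := hp.rotate hx
  have hmem : ∀ f, f ∈ (p.rotate x hx).edges ↔ f ∈ p.edges :=
    fun f => (Walk.rotate_edges p x hx).mem_iff
  have hlen := hp'.three_le_length
  set q := p.rotate x hx with hq
  clear_value q
  match q, hp', hmem, hlen with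
  | .cons (v := v) h r, hp', hmem, hlen =>
    rw [Walk.cons_isCycle_iff] at hp'
    have hrnil : ¬ r.reverse.Nil := by
      rw [Walk.not_nil_iff_lt_length]
      simp only [Walk.length_cons] at hlen
      rw [Walk.length_reverse]; omega
    obtain ⟨w, h2, s, hs⟩ := Walk.not_nil_iff.mp hrnil
    have he2 : s(x, w) ∈ r.edges := by
      have : s(x, w) ∈ r.reverse.edges := by rw [hs]; simp
      rwa [Walk.edges_reverse, List.mem_reverse] at this
    refine ⟨s(x, v), ?_, s(x, w), ?_, ?_, ?_, ?_⟩
    · rw [← hmem]; simp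
    · rw [← hmem]; simp [he2]
    · intro hcon
      exact hp'.2 (hcon ▸ he2)
    · simp
    · simp

/-- If `I` is an independent set of `G`, then the edge set `I' = {e_v : v ∈ I}` in the cone
`G'` over `G` contains no broken circuit, with respect to any ordering in which every edge of
`G` precedes every edge `e_v`. -/
theorem indep_set_image_no_broken_circuit {V : Type*} [DecidableEq V]
    (G : SimpleGraph V) (ord : Sym2 (V ⊕ Unit) → ℕ) (hordinj : Function.Injective ord)
    (hord : ∀ a b : V, G.Adj a b → ∀ v : V, ord s(Sum.inl a, Sum.inl b) < ord (coneEdge v))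
    (I : Finset V) (hI : ∀ u ∈ I, ∀ v ∈ I, u ≠ v → ¬ G.Adj u v) :
    ¬ HasBrokenCircuit (coneGraph G) ord (I.image coneEdge) := by
  rintro ⟨C, e, ⟨hCsub, hCnot, hCmin⟩, heC, -, hsub⟩
  have hC' : ∀ f ∈ C, f ≠ e → ∃ v ∈ I, coneEdge v = f := by
    intro f hf hne
    have hfI := hsub (Finset.mem_erase.mpr ⟨hne, hf⟩)
    simpa [Finset.mem_image] using hfI
  apply hCnot
  intro u p hp
  exfalso
  have hpC : ∀ f ∈ p.edges, f ∈ C := by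
    intro f hf
    have h1 := p.edges_subset_edgeSet hf
    rw [edgeSet_fromEdgeSet] at h1
    exact_mod_cast h1.1
  by_cases hep : e ∈ p.edges
  · -- e is used by the cycle
    -- key: for a vertex `inl a` in the support of p, either all C-edges containing it equal e,
    -- or a ∈ I
    have key : ∀ a : V, Sum.inl a ∈ p.support → e ≠ coneEdge a →
        (∃ f ∈ p.edges, f ≠ e ∧ Sum.inl a ∈ f) := by
      intro a ha _hne
      obtain ⟨e₁, he₁, e₂, he₂, hne12, hx1, hx2⟩ := cycle_two_edges p hp ha
      by_cases h1 : e₁ = e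
      · exact ⟨e₂, he₂, fun hcon => hne12 (h1.trans hcon.symm), hx2⟩
      · exact ⟨e₁, he₁, h1, hx1⟩
    have memI : ∀ a : V, Sum.inl a ∈ p.support → e ≠ coneEdge a → a ∈ I := by
      intro a ha hne
      obtain ⟨f, hf, hfne, haf⟩ := key a ha hne
      obtain ⟨v, hvI, hfv⟩ := hC' f (hpC f hf) hfne
      rw [← hfv] at haf
      rw [coneEdge, Sym2.mem_iff] at haf
      rcases haf with h | h
      · exact absurd h (by simp)
      · rw [Sum.inl.injEq] at h
        exact h ▸ hvI
    -- analyze e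
    have he' := hCsub heC
    rw [(Iff.rfl : e ∈ (coneGraph G).edgeSet ↔ (coneGraph G).edgeSet e), coneGraph, edgeSet_sup] at he'
    obtain ⟨⟨x, y⟩, rfl⟩ := Quot.exists_rep e
    rcases he' with he' | he'
    · -- e comes from G
      rw [mem_edgeSet, map_adj] at he'
      obtain ⟨a, b, hab, hx, hy⟩ := he'
      subst hx; subst hy
      have hcone : ∀ c : V, (s(Sum.inl a, Sum.inl b) : Sym2 (V ⊕ Unit)) ≠ coneEdge c := by
        intro c hcon
        rw [coneEdge, Sym2.eq_iff] at hcon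
        rcases hcon with ⟨h, -⟩ | ⟨-, h⟩ <;> exact absurd h (by simp)
      have haI : a ∈ I := memI a (p.fst_mem_support_of_mem_edges hep) (hcone a)
      have hbI : b ∈ I := memI b (p.snd_mem_support_of_mem_edges hep) (hcone b)
      exact hI a haI b hbI hab.ne hab
    · -- e is a cone edge
      rw [edgeSet_fromEdgeSet] at he'
      obtain ⟨v₀, hv₀⟩ := he'.1
      -- so e = coneEdge v₀; every C-edge containing inl v₀ is coneEdge v₀
      have hsup : Sum.inl v₀ ∈ p.support := by
        rw [show (Quot.mk _ (x, y) : Sym2 (V ⊕ Unit)) = s(Sum.inr (), Sum.inl v₀) from hv₀] at hep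
        exact p.snd_mem_support_of_mem_edges hep
      obtain ⟨e₁, he₁, e₂, he₂, hne12, hx1, hx2⟩ := cycle_two_edges p hp hsup
      have all_eq : ∀ f ∈ p.edges, Sum.inl v₀ ∈ f → f = s(Sum.inr (), Sum.inl v₀) := by
        intro f hf hvf
        by_cases hfe : f = Quot.mk _ (x, y)
        · exact hfe.trans hv₀
        · obtain ⟨v, hvI, hfv⟩ := hC' f (hpC f hf) hfe
          rw [← hfv, coneEdge, Sym2.mem_iff] at hvf
          rcases hvf with h | h
          · exact absurd h (by simp)
          · rw [Sum.inl.injEq] at h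
            rw [← hfv, coneEdge, ← h]
      exact hne12 ((all_eq e₁ he₁ hx1).trans (all_eq e₂ he₂ hx2).symm)
  · -- e not used: transfer the cycle to C.erase e
    have hq : ∀ f ∈ p.edges, f ∈ (fromEdgeSet (↑(C.erase e) : Set (Sym2 (V ⊕ Unit)))).edgeSet := by
      intro f hf
      have h1 := p.edges_subset_edgeSet hf
      rw [edgeSet_fromEdgeSet] at h1 ⊢
      refine ⟨?_, h1.2⟩
      have : f ≠ e := fun hcon => hep (hcon ▸ hf)
      exact_mod_cast Finset.mem_erase.mpr ⟨this, hpC f hf⟩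
    exact hCmin e heC (p.transfer _ hq) (hp.transfer hq)
end

section
/- Let G = K_{n,n} with parts A, B, and construct G' by adding vertices y, z, and z_{v,i} for v ∈ A∪B, i ∈ [ℓ], with edges e_0 = {y,z}, e_{v,i} = {z, z_{v,i}}, f_{v,i} = {z_{v,i}, v}. Order the edges as e_0 < E(G) < {e_{v,i}} < {f_{v,i}}. Let M be the graphic matroid of G' truncated to rank 2ℓn + n + 1 and let τ = {e_{v,i} : v ∈ A∪B, i ∈ [ℓ]}. Then for every facet S of the link of τ in the broken circuit complex of (M, O), either S contains no edge f_{v,i} with v ∈ A, or S contains no edge f_{u,j} with u ∈ B. -/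
open SimpleGraph

section NBC

variable {W : Type*} [DecidableEq W]

/-- Circuits of the graphic matroid truncated to rank `r'`: the graph circuits together with
all forests of size `r' + 1`. -/
def IsTruncCircuit (H : SimpleGraph W) (r' : ℕ) (C : Finset (Sym2 W)) : Prop :=
  IsGraphCircuit H C ∨ (IsForestIn H C ∧ C.card = r' + 1)

def TruncHasBrokenCircuit (H : SimpleGraph W) (r' : ℕ) (ord : Sym2 W → ℕ)
    (S : Finset (Sym2 W)) : Prop :=
  ∃ C e, IsTruncCircuit H r' C ∧ e ∈ C ∧ (∀ f ∈ C, f ≠ e → ord e < ord f) ∧ C.erase e ⊆ S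

/-- NBC bases of the graphic matroid of `H` truncated to rank `r'`: forests with exactly
`r'` edges containing no broken circuit of the truncation. -/
def IsTruncNBCBasis (H : SimpleGraph W) (r' : ℕ) (ord : Sym2 W → ℕ)
    (B : Finset (Sym2 W)) : Prop :=
  IsForestIn H B ∧ B.card = r' ∧ ¬ TruncHasBrokenCircuit H r' ord B

end NBC

/-- Vertices: `Sum.inl (true, a)` = vertex `a` of side `A`, `Sum.inl (false, b)` = vertex `b`
of side `B`, `Sum.inr (Sum.inl (v, i))` = `z_{v,i}`, `Sum.inr (Sum.inr true)` = `y`,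
`Sum.inr (Sum.inr false)` = `z`. -/
abbrev W8 : Type := (Bool × ℕ) ⊕ ((Bool × ℕ) × ℕ) ⊕ Bool

def y8 : W8 := Sum.inr (Sum.inr true)
def z8 : W8 := Sum.inr (Sum.inr false)
def e0 : Sym2 W8 := s(y8, z8)
def eE (v : Bool × ℕ) (i : ℕ) : Sym2 W8 := s(z8, Sum.inr (Sum.inl (v, i)))
def fE (v : Bool × ℕ) (i : ℕ) : Sym2 W8 := s(Sum.inr (Sum.inl (v, i)), Sum.inl v)

/-- The graph `G'`: the complete bipartite graph `K_{n,n}` together with `y, z`, the `z_{v,i}`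
and the edges `e_0`, `e_{v,i}`, `f_{v,i}` (`i ∈ [ℓ]`). -/
def G8 (n ℓ : ℕ) : SimpleGraph W8 :=
  SimpleGraph.fromEdgeSet
    ({x | ∃ a < n, ∃ b < n, x = s(Sum.inl (true, a), Sum.inl (false, b))} ∪ {e0} ∪
     {x | ∃ v : Bool × ℕ, v.2 < n ∧ ∃ i < ℓ, x = eE v i ∨ x = fE v i})

/-- The face `τ = {e_{v,i} : v ∈ A ∪ B, i ∈ [ℓ]}`. -/
def tau8 (n ℓ : ℕ) : Finset (Sym2 W8) :=
  (((Finset.univ : Finset Bool) ×ˢ Finset.range n) ×ˢ Finset.range ℓ).image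
    fun p => eE p.1 p.2


def pathN : SimpleGraph ℕ := SimpleGraph.fromRel (fun a b => b = a + 1)

lemma pathN_adj {a b : ℕ} : pathN.Adj a b ↔ a ≠ b ∧ (b = a + 1 ∨ a = b + 1) := by
  simp [pathN, SimpleGraph.fromRel_adj]

lemma pathN_isAcyclic : pathN.IsAcyclic := by
  rw [isAcyclic_iff_forall_adj_isBridge]
  have key : ∀ v w : ℕ, w = v + 1 → pathN.IsBridge s(v, w) := by
    rintro v w rfl
    rw [isBridge_iff]
    rintro ⟨p⟩
    have aux : ∀ (x y : ℕ) (q : (pathN \ fromEdgeSet {s(v, v+1)}).Walk x y), x ≤ v → y ≤ v := by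
      intro x y q
      induction q with
      | nil => exact id
      | cons h q ih =>
        intro hx
        apply ih
        rw [SimpleGraph.sdiff_adj, pathN_adj] at h
        obtain ⟨⟨hne, hor⟩, hnot⟩ := h
        simp only [fromEdgeSet_adj, Set.mem_singleton_iff, Sym2.eq_iff] at hnot
        omega
    have := aux v (v+1) p le_rfl
    omega
  intro v w hvw
  rcases pathN_adj.1 hvw with ⟨hne, h | h⟩
  · exact key v w h
  · rw [Sym2.eq_swap]; exact key w v h

lemma acyclic_anti_s8 {V : Type*} {G G' : SimpleGraph V} (h : G ≤ G') (hG' : G'.IsAcyclic) :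
    G.IsAcyclic := fun _ c hc => hG' (c.mapLe h) ((Walk.mapLe_isCycle h).2 hc)

lemma acyclic_of_hom {V : Type*} (G : SimpleGraph V) (f : V → ℕ) (hinj : Function.Injective f)
    (h : ∀ x y, G.Adj x y → pathN.Adj (f x) (f y)) : G.IsAcyclic := by
  intro v c hc
  exact pathN_isAcyclic ((c.map ⟨f, fun h' => h _ _ h'⟩).copy rfl rfl)
    (by rw [Walk.isCycle_copy]; exact hc.map hinj)

noncomputable def emb5 {V : Type*} [DecidableEq V] (v0 v1 v2 v3 v4 : V) (g : V ↪ ℕ) (x : V) : ℕ :=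
  if x = v0 then 0 else if x = v1 then 1 else if x = v2 then 2 else if x = v3 then 3
  else if x = v4 then 4 else 5 + g x

lemma emb5_inj {V : Type*} [DecidableEq V] {v0 v1 v2 v3 v4 : V} (g : V ↪ ℕ)
    (h01 : v0 ≠ v1) (h02 : v0 ≠ v2) (h03 : v0 ≠ v3) (h04 : v0 ≠ v4)
    (h12 : v1 ≠ v2) (h13 : v1 ≠ v3) (h14 : v1 ≠ v4)
    (h23 : v2 ≠ v3) (h24 : v2 ≠ v4) (h34 : v3 ≠ v4) :
    Function.Injective (emb5 v0 v1 v2 v3 v4 g) := by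
  intro x y h
  unfold emb5 at h
  split_ifs at h <;> subst_vars <;> first | rfl | omega | exact g.injective (by omega)


lemma path5_acyclic {V : Type*} [DecidableEq V] (g : V ↪ ℕ) (v0 v1 v2 v3 v4 : V)
    (h01 : v0 ≠ v1) (h02 : v0 ≠ v2) (h03 : v0 ≠ v3) (h04 : v0 ≠ v4)
    (h12 : v1 ≠ v2) (h13 : v1 ≠ v3) (h14 : v1 ≠ v4)
    (h23 : v2 ≠ v3) (h24 : v2 ≠ v4) (h34 : v3 ≠ v4) :
    (fromEdgeSet {s(v0,v1), s(v1,v2), s(v2,v3), s(v3,v4)} : SimpleGraph V).IsAcyclic := by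
  have hinj := emb5_inj g h01 h02 h03 h04 h12 h13 h14 h23 h24 h34
  apply acyclic_of_hom _ (emb5 v0 v1 v2 v3 v4 g) hinj
  intro x y hxy
  rw [fromEdgeSet_adj] at hxy
  obtain ⟨hmem, hne⟩ := hxy
  rw [pathN_adj]
  refine ⟨fun h => hne (hinj h), ?_⟩
  simp only [Set.mem_insert_iff, Set.mem_singleton_iff, Sym2.eq_iff] at hmem
  rcases hmem with (⟨rfl,rfl⟩|⟨rfl,rfl⟩)|(⟨rfl,rfl⟩|⟨rfl,rfl⟩)|(⟨rfl,rfl⟩|⟨rfl,rfl⟩)|(⟨rfl,rfl⟩|⟨rfl,rfl⟩) <;>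
    simp [emb5, h01, h02, h03, h04, h12, h13, h14, h23, h24, h34,
      h01.symm, h02.symm, h03.symm, h04.symm, h12.symm, h13.symm, h14.symm,
      h23.symm, h24.symm, h34.symm]

lemma cycle5_not_acyclic {V : Type*} [DecidableEq V] (v0 v1 v2 v3 v4 : V)
    (h01 : v0 ≠ v1) (h02 : v0 ≠ v2) (h03 : v0 ≠ v3) (h04 : v0 ≠ v4)
    (h12 : v1 ≠ v2) (h13 : v1 ≠ v3) (h14 : v1 ≠ v4)
    (h23 : v2 ≠ v3) (h24 : v2 ≠ v4) (h34 : v3 ≠ v4) :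
    ¬ (fromEdgeSet ({s(v0,v1), s(v1,v2), s(v2,v3), s(v3,v4), s(v4,v0)} : Set (Sym2 V))).IsAcyclic := by
  intro h
  set S : Set (Sym2 V) := {s(v0,v1), s(v1,v2), s(v2,v3), s(v3,v4), s(v4,v0)} with hS
  have a01 : (fromEdgeSet S).Adj v0 v1 := by rw [fromEdgeSet_adj]; exact ⟨by simp [hS], h01⟩
  have a12 : (fromEdgeSet S).Adj v1 v2 := by rw [fromEdgeSet_adj]; exact ⟨by simp [hS], h12⟩
  have a23 : (fromEdgeSet S).Adj v2 v3 := by rw [fromEdgeSet_adj]; exact ⟨by simp [hS], h23⟩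
  have a34 : (fromEdgeSet S).Adj v3 v4 := by rw [fromEdgeSet_adj]; exact ⟨by simp [hS], h34⟩
  have a40 : (fromEdgeSet S).Adj v4 v0 := by rw [fromEdgeSet_adj]; exact ⟨by simp [hS], h04.symm⟩
  refine h (.cons a01 (.cons a12 (.cons a23 (.cons a34 (.cons a40 .nil))))) ?_
  rw [Walk.isCycle_def]
  refine ⟨?_, by simp, ?_⟩
  · rw [Walk.isTrail_def]
    simp [Sym2.eq_iff, h01, h02, h03, h04, h12, h13, h14, h23, h24, h34,
      h01.symm, h02.symm, h03.symm, h04.symm, h12.symm, h13.symm, h14.symm,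
      h23.symm, h24.symm, h34.symm]
  · simp [h01, h02, h03, h04, h12, h13, h14, h23, h24, h34,
      h01.symm, h02.symm, h03.symm, h04.symm, h12.symm, h13.symm, h14.symm,
      h23.symm, h24.symm, h34.symm]

noncomputable def embW8 : W8 ↪ ℕ := ⟨Encodable.encode, Encodable.encode_injective⟩

lemma path5_acyclic' {V : Type*} [DecidableEq V] (g : V ↪ ℕ) (v0 v1 v2 v3 v4 : V)
    (h01 : v0 ≠ v1) (h02 : v0 ≠ v2) (h03 : v0 ≠ v3) (h04 : v0 ≠ v4)
    (h12 : v1 ≠ v2) (h13 : v1 ≠ v3) (h14 : v1 ≠ v4)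
    (h23 : v2 ≠ v3) (h24 : v2 ≠ v4) (h34 : v3 ≠ v4)
    (T : Set (Sym2 V)) (hT : T ⊆ {s(v0,v1), s(v1,v2), s(v2,v3), s(v3,v4)}) :
    (SimpleGraph.fromEdgeSet T).IsAcyclic :=
  acyclic_anti_s8 (SimpleGraph.fromEdgeSet_mono hT)
    (path5_acyclic g v0 v1 v2 v3 v4 h01 h02 h03 h04 h12 h13 h14 h23 h24 h34)

set_option maxHeartbeats 2000000 in
/-- In the `K_{n,n}` construction, with the graphic matroid of `G'` truncated to rank
`2ℓn + n + 1` and any edge ordering with `e_0 < E(G) < {e_{v,i}} < {f_{v,i}}`, every facet of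
the link of `τ` in the broken circuit complex (i.e. every NBC basis `B ⊇ τ`) avoids either
all `f`-edges on side `A` or all `f`-edges on side `B`. -/
theorem facet_of_link_misses_one_side (n ℓ : ℕ) (hn : 1 ≤ n) (hℓ : 1 ≤ ℓ)
    (ord : Sym2 W8 → ℕ) (hinj : Function.Injective ord)
    (h0E : ∀ a < n, ∀ b < n, ord e0 < ord s(Sum.inl (true, a), Sum.inl (false, b)))
    (hEe : ∀ a < n, ∀ b < n, ∀ v : Bool × ℕ, v.2 < n → ∀ i < ℓ,
      ord s(Sum.inl (true, a), Sum.inl (false, b)) < ord (eE v i))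
    (hef : ∀ v : Bool × ℕ, v.2 < n → ∀ i < ℓ, ∀ u : Bool × ℕ, u.2 < n → ∀ j < ℓ,
      ord (eE v i) < ord (fE u j)) :
    ∀ B : Finset (Sym2 W8),
      IsTruncNBCBasis (G8 n ℓ) (2 * ℓ * n + n + 1) ord B → tau8 n ℓ ⊆ B →
      (∀ a < n, ∀ i < ℓ, fE (true, a) i ∉ B) ∨ (∀ b < n, ∀ i < ℓ, fE (false, b) i ∉ B) := by
  intro B hB hτB
  by_contra hcon
  push_neg at hcon
  obtain ⟨⟨a, ha, i, hi, hfa⟩, b, hb, j, hj, hfb⟩ := hcon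
  set p0 : W8 := z8 with hp0
  set p1 : W8 := Sum.inr (Sum.inl ((true, a), i)) with hp1
  set p2 : W8 := Sum.inl (true, a) with hp2
  set p3 : W8 := Sum.inl (false, b) with hp3
  set p4 : W8 := Sum.inr (Sum.inl ((false, b), j)) with hp4
  have d01 : p0 ≠ p1 := by simp [hp0, hp1, z8]
  have d02 : p0 ≠ p2 := by simp [hp0, hp2, z8]
  have d03 : p0 ≠ p3 := by simp [hp0, hp3, z8]
  have d04 : p0 ≠ p4 := by simp [hp0, hp4, z8]
  have d12 : p1 ≠ p2 := by simp [hp1, hp2]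
  have d13 : p1 ≠ p3 := by simp [hp1, hp3]
  have d14 : p1 ≠ p4 := by simp [hp1, hp4]
  have d23 : p2 ≠ p3 := by simp [hp2, hp3]
  have d24 : p2 ≠ p4 := by simp [hp2, hp4]
  have d34 : p3 ≠ p4 := by simp [hp3, hp4]
  have hE0 : eE (true, a) i = s(p0, p1) := rfl
  have hE1 : fE (true, a) i = s(p1, p2) := rfl
  have hE3 : fE (false, b) j = s(p3, p4) := Sym2.eq_swap
  have hE4 : eE (false, b) j = s(p4, p0) := Sym2.eq_swap
  set C : Finset (Sym2 W8) :=
    {s(p0, p1), s(p1, p2), s(p2, p3), s(p3, p4), s(p4, p0)} with hC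
  set e : Sym2 W8 := s(p2, p3) with he
  -- the five edges are pairwise distinct
  have hCcoe : (↑C : Set (Sym2 W8)) =
      {s(p0, p1), s(p1, p2), s(p2, p3), s(p3, p4), s(p4, p0)} := by
    simp [hC, he]
  apply hB.2.2
  refine ⟨C, e, Or.inl ⟨?_, ?_, ?_⟩, by simp [hC, he], ?_, ?_⟩
  · -- C ⊆ edgeSet of G8
    rw [hCcoe]
    intro x hx
    rw [G8, SimpleGraph.edgeSet_fromEdgeSet]
    simp only [Set.mem_insert_iff, Set.mem_singleton_iff] at hx
    constructor
    · rcases hx with rfl | rfl | rfl | rfl | rfl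
      · exact Or.inr (Set.mem_setOf.2 ⟨(true, a), ha, i, hi, Or.inl hE0.symm⟩)
      · exact Or.inr (Set.mem_setOf.2 ⟨(true, a), ha, i, hi, Or.inr hE1.symm⟩)
      · exact Or.inl (Or.inl (Set.mem_setOf.2 ⟨a, ha, b, hb, rfl⟩))
      · exact Or.inr (Set.mem_setOf.2 ⟨(false, b), hb, j, hj, Or.inr hE3.symm⟩)
      · exact Or.inr (Set.mem_setOf.2 ⟨(false, b), hb, j, hj, Or.inl hE4.symm⟩)
    · rcases hx with rfl | rfl | rfl | rfl | rfl <;>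
        simp only [Sym2.mem_diagSet, Sym2.isDiag_iff_proj_eq] <;>
        first
          | exact d01 | exact d12 | exact d23 | exact d34 | exact d04.symm
  · -- not acyclic
    rw [hCcoe]
    exact cycle5_not_acyclic p0 p1 p2 p3 p4 d01 d02 d03 d04 d12 d13 d14 d23 d24 d34
  · -- minimality: each erase is acyclic
    intro f hf
    have herase : ∀ g : Sym2 W8, (↑(C.erase g) : Set (Sym2 W8)) ⊆ (↑C : Set (Sym2 W8)) \ {g} := by
      intro g x hx
      rw [Finset.coe_erase] at hx
      exact hx
    simp only [hC, Finset.mem_insert, Finset.mem_singleton] at hf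
    rcases hf with rfl | rfl | rfl | rfl | rfl
    · refine path5_acyclic' embW8 p1 p2 p3 p4 p0 d12 d13 d14 (Ne.symm d01) d23 d24
        (Ne.symm d02) d34 (Ne.symm d03) (Ne.symm d04) _ ?_
      intro x hx
      have := herase _ hx
      rw [hCcoe] at this
      simp only [Set.mem_diff, Set.mem_insert_iff, Set.mem_singleton_iff] at this ⊢
      tauto
    · refine path5_acyclic' embW8 p2 p3 p4 p0 p1 d23 d24 (Ne.symm d02) (Ne.symm d12) d34
        (Ne.symm d03) (Ne.symm d13) (Ne.symm d04) (Ne.symm d14) d01 _ ?_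
      intro x hx
      have := herase _ hx
      rw [hCcoe] at this
      simp only [Set.mem_diff, Set.mem_insert_iff, Set.mem_singleton_iff] at this ⊢
      tauto
    · refine path5_acyclic' embW8 p3 p4 p0 p1 p2 d34 (Ne.symm d03) (Ne.symm d13)
        (Ne.symm d23) (Ne.symm d04) (Ne.symm d14) (Ne.symm d24) d01 d02 d12 _ ?_
      intro x hx
      have := herase _ hx
      rw [hCcoe] at this
      simp only [Set.mem_diff, Set.mem_insert_iff, Set.mem_singleton_iff] at this ⊢
      tauto
    · refine path5_acyclic' embW8 p4 p0 p1 p2 p3 (Ne.symm d04) (Ne.symm d14) (Ne.symm d24)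
        (Ne.symm d34) d01 d02 d03 d12 d13 d23 _ ?_
      intro x hx
      have := herase _ hx
      rw [hCcoe] at this
      simp only [Set.mem_diff, Set.mem_insert_iff, Set.mem_singleton_iff] at this ⊢
      tauto
    · refine path5_acyclic' embW8 p0 p1 p2 p3 p4 d01 d02 d03 d04 d12 d13 d14 d23 d24 d34 _ ?_
      intro x hx
      have := herase _ hx
      rw [hCcoe] at this
      simp only [Set.mem_diff, Set.mem_insert_iff, Set.mem_singleton_iff] at this ⊢
      tauto
  · -- e is the minimum of C
    intro f hf hfe
    have hlt0 : ord e < ord (eE (true, a) i) := by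
      rw [he, hp2, hp3]; exact hEe a ha b hb (true, a) ha i hi
    have hlt0' : ord e < ord (eE (false, b) j) := by
      rw [he, hp2, hp3]; exact hEe a ha b hb (false, b) hb j hj
    have hlt1 : ord e < ord (fE (true, a) i) :=
      hlt0.trans (hef (true, a) ha i hi (true, a) ha i hi)
    have hlt3 : ord e < ord (fE (false, b) j) :=
      hlt0.trans (hef (true, a) ha i hi (false, b) hb j hj)
    simp only [hC, Finset.mem_insert, Finset.mem_singleton] at hf
    rcases hf with rfl | rfl | rfl | rfl | rfl
    · rw [← hE0]; exact hlt0
    · rw [← hE1]; exact hlt1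
    · exact absurd rfl hfe
    · rw [← hE3]; exact hlt3
    · rw [← hE4]; exact hlt0'
  · -- C.erase e ⊆ B
    intro x hx
    rw [Finset.mem_erase] at hx
    obtain ⟨hxe, hxC⟩ := hx
    simp only [hC, Finset.mem_insert, Finset.mem_singleton] at hxC
    have htau : ∀ v : Bool × ℕ, v.2 < n → ∀ k < ℓ, eE v k ∈ B := by
      intro v hv k hk
      apply hτB
      rw [tau8, Finset.mem_image]
      exact ⟨((v.1, v.2), k), by simp [Finset.mem_product, hv, hk], rfl⟩
    rcases hxC with rfl | rfl | rfl | rfl | rfl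
    · rw [← hE0]; exact htau (true, a) ha i hi
    · rw [← hE1]; exact hfa
    · exact absurd rfl hxe
    · rw [← hE3]; exact hfb
    · rw [← hE4]; exact htau (false, b) hb j hj
end

section
/- Let G = (V, E) be a graph, and construct G' by adding for each v ∈ V and i ∈ [ℓ] a vertex z_{v,i}, plus vertices y, z, and edges e_0 = {y,z}, e_{v,i} = {z, z_{v,i}}, f_{v,i} = {z_{v,i}, v}, with ordering e_0 < E < {e_{v,i}} < {f_{v,i}}. Let M be the graphic matroid of G' truncated to rank ℓn + ⌊αn⌋ + 1 (n = |V|, α fixed) and τ = {e_{v,i}}. Then for every facet S of the link X_τ of the broken circuit complex: (a) the set {v : ∃i, f_{v,i} ∈ S} is an independent set of G, and (b) if f_{v,i}, f_{v,j} ∈ S then i = j. Conversely, for every independent set I of G with |I| = ⌊αn⌋ and every choice of indices i_v ∈ [ℓ] for v ∈ I, the set {f_{v,i_v} : v ∈ I} ∪ {e_0} is a facet of X_τ. -/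
open SimpleGraph

section Construction

/-- Vertices of `G'`: `Sum.inl v` = vertex `v` of `G`, `Sum.inr (Sum.inl (v, i))` = `z_{v,i}`,
`Sum.inr (Sum.inr true)` = `y`, `Sum.inr (Sum.inr false)` = `z`. -/
abbrev Wc (V : Type*) : Type _ := V ⊕ (V × ℕ) ⊕ Bool

variable {V : Type*} [Fintype V] [DecidableEq V]

def yc : Wc V := Sum.inr (Sum.inr true)
def zc : Wc V := Sum.inr (Sum.inr false)
def e0c : Sym2 (Wc V) := s(yc, zc)
def eC (v : V) (i : ℕ) : Sym2 (Wc V) := s(zc, Sum.inr (Sum.inl (v, i)))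
def fC (v : V) (i : ℕ) : Sym2 (Wc V) := s(Sum.inr (Sum.inl (v, i)), Sum.inl v)

/-- The graph `G'` obtained from `G` by adding `y, z`, the `z_{v,i}` for `i ∈ [ℓ]`, and the
edges `e_0 = {y,z}`, `e_{v,i} = {z, z_{v,i}}`, `f_{v,i} = {z_{v,i}, v}`. -/
def Gc (G : SimpleGraph V) (ℓ : ℕ) : SimpleGraph (Wc V) :=
  G.map Sum.inl ⊔
    SimpleGraph.fromEdgeSet
      ({e0c} ∪ {x | ∃ v : V, ∃ i < ℓ, x = eC v i ∨ x = fC v i})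

/-- The face `τ = {e_{v,i} : v ∈ V, i ∈ [ℓ]}`. -/
def tauC (ℓ : ℕ) : Finset (Sym2 (Wc V)) :=
  ((Finset.univ : Finset V) ×ˢ Finset.range ℓ).image fun p => eC p.1 p.2

/-- An edge ordering of `G'` compatible with `e_0 < E < {e_{v,i}} < {f_{v,i}}`. -/
def OrdOKc (G : SimpleGraph V) (ℓ : ℕ) (ord : Sym2 (Wc V) → ℕ) : Prop :=
  Function.Injective ord ∧
  (∀ a b : V, G.Adj a b → ord e0c < ord s(Sum.inl a, Sum.inl b)) ∧
  (∀ a b : V, G.Adj a b → ∀ v : V, ∀ i < ℓ, ord s(Sum.inl a, Sum.inl b) < ord (eC v i)) ∧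
  (∀ v : V, ∀ i < ℓ, ∀ u : V, ∀ j < ℓ, ord (eC v i) < ord (fC u j))

end Construction


section AuxNBC
namespace AuxNBC

variable {W : Type*} [DecidableEq W]

lemma support_getElem' {G : SimpleGraph W} {u v : W} (p : G.Walk u v) (i : ℕ)
    (hi : i < p.length + 1) :
    p.support[i]'(by simp [Walk.length_support, hi]) = p.getVert i := by
  induction p generalizing i with
  | nil => simp at hi; subst hi; simp
  | cons h q ih =>
    cases i with
    | zero => simp
    | succ j =>
      simp only [Walk.support_cons, List.getElem_cons_succ, Walk.getVert_cons_succ]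
      exact ih j (by simpa [Nat.succ_lt_succ_iff] using hi)

/-- Key lemma: a graph admitting a parent function decreasing a height is acyclic. -/
lemma acyclic_of_parent {G : SimpleGraph W} (par : W → W) (h : W → ℕ)
    (hpar : ∀ a b, G.Adj a b → (par a = b ∧ h b < h a) ∨ (par b = a ∧ h a < h b)) :
    G.IsAcyclic := by
  intro v p hp
  obtain ⟨u, hu, hmax⟩ := p.support.toFinset.exists_max_image h ⟨v, by simp⟩
  rw [List.mem_toFinset] at hu
  set q := p.rotate u hu with hq
  have hqc : q.IsCycle := hp.rotate hu
  have hlen : 3 ≤ q.length := hqc.three_le_length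
  have hmem : ∀ x ∈ q.support, h x ≤ h u := by
    intro x hx
    rcases (Walk.mem_support_iff _).mp hx with rfl | hx'
    · exact le_refl _
    · apply hmax; rw [List.mem_toFinset]
      have := (Walk.support_rotate p u hu).mem_iff.mp hx'
      exact (Walk.mem_support_iff _).mpr (Or.inr this)
  have h1 : G.Adj u (q.getVert 1) := by
    have := q.adj_getVert_succ (i := 0) (by omega)
    simpa using this
  have h2 : G.Adj (q.getVert (q.length - 1)) u := by
    have := q.adj_getVert_succ (i := q.length - 1) (by omega)
    rw [show q.length - 1 + 1 = q.length by omega, Walk.getVert_length] at this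
    exact this
  have hm1 : h (q.getVert 1) ≤ h u :=
    hmem _ (Walk.mem_support_iff_exists_getVert.mpr ⟨1, rfl, by omega⟩)
  have hm2 : h (q.getVert (q.length - 1)) ≤ h u :=
    hmem _ (Walk.mem_support_iff_exists_getVert.mpr ⟨q.length - 1, rfl, by omega⟩)
  have e1 : par u = q.getVert 1 := by
    rcases hpar _ _ h1 with ⟨h', _⟩ | ⟨_, h'⟩
    · exact h'
    · omega
  have e2 : par u = q.getVert (q.length - 1) := by
    rcases hpar _ _ h2 with ⟨_, h'⟩ | ⟨h', _⟩
    · omega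
    · exact h'
  have heq : q.getVert 1 = q.getVert (q.length - 1) := e1 ▸ e2
  -- contradiction with support.tail nodup
  have hnd : q.support.tail.Nodup := hqc.support_nodup
  have hlt : ∀ j (hj : j < q.length), q.support.tail[j]'(by rw [List.length_tail, q.length_support]; omega) = q.getVert (j+1) := by
    intro j hj
    have : q.support.tail[j]'(by rw [List.length_tail, q.length_support]; omega)
        = q.support[j+1]'(by rw [q.length_support]; omega) := by
      rw [List.getElem_tail]
    rw [this, support_getElem' q (j+1) (by omega)]
  have h0 : q.support.tail[0]'(by rw [List.length_tail, q.length_support]; omega)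
      = q.getVert 1 := hlt 0 (by omega)
  have h3 : q.support.tail[q.length - 2]'(by rw [List.length_tail, q.length_support]; omega)
      = q.getVert (q.length - 1) := by
    have := hlt (q.length - 2) (by omega)
    rwa [show q.length - 2 + 1 = q.length - 1 by omega] at this
  have := (List.Nodup.getElem_inj_iff hnd (i := 0) (j := q.length - 2)
    (hi := by rw [List.length_tail, q.length_support]; omega)
    (hj := by rw [List.length_tail, q.length_support]; omega)).mp
    (by rw [h0, h3]; exact heq)
  omega

lemma acyclic_fromEdgeSet_of_parent (S : Set (Sym2 W)) (par : W → W) (h : W → ℕ)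
    (hp : ∀ e ∈ S, ∃ a b, e = s(a, b) ∧ par a = b ∧ h b < h a) :
    (SimpleGraph.fromEdgeSet S).IsAcyclic := by
  apply acyclic_of_parent par h
  intro a b hab
  rw [fromEdgeSet_adj] at hab
  obtain ⟨x, y, hxy, hpx, hlt⟩ := hp _ hab.1
  rw [Sym2.eq_iff] at hxy
  rcases hxy with ⟨rfl, rfl⟩ | ⟨rfl, rfl⟩
  · exact Or.inl ⟨hpx, hlt⟩
  · exact Or.inr ⟨hpx, hlt⟩

lemma isAcyclic_anti {G H : SimpleGraph W} (hle : G ≤ H) (hH : H.IsAcyclic) : G.IsAcyclic := by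
  intro v p hp
  exact hH (p.mapLe hle) ((Walk.mapLe_isCycle hle).mpr hp)

lemma not_acyclic_four (S : Set (Sym2 W)) (a b c d : W)
    (hab : s(a,b) ∈ S) (hbc : s(b,c) ∈ S) (hcd : s(c,d) ∈ S) (hda : s(d,a) ∈ S)
    (h1 : a ≠ b) (h2 : a ≠ c) (h3 : a ≠ d) (h4 : b ≠ c) (h5 : b ≠ d) (h6 : c ≠ d) :
    ¬ (SimpleGraph.fromEdgeSet S).IsAcyclic := by
  intro hA
  have adj : ∀ x y : W, s(x,y) ∈ S → x ≠ y → (SimpleGraph.fromEdgeSet S).Adj x y :=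
    fun x y hm hne => (fromEdgeSet_adj _).mpr ⟨hm, hne⟩
  refine hA (Walk.cons (adj a b hab h1) (Walk.cons (adj b c hbc h4) (Walk.cons (adj c d hcd h6)
    (Walk.cons (adj d a hda (Ne.symm h3)) Walk.nil)))) ?_
  constructor
  · constructor
    · simp [Walk.isTrail_def, Sym2.eq_iff]
      tauto
    · simp
  · simp [Sym2.eq_iff]
    tauto

lemma not_acyclic_five (S : Set (Sym2 W)) (a b c d e : W)
    (hab : s(a,b) ∈ S) (hbc : s(b,c) ∈ S) (hcd : s(c,d) ∈ S) (hde : s(d,e) ∈ S) (hea : s(e,a) ∈ S)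
    (h1 : a ≠ b) (h2 : a ≠ c) (h3 : a ≠ d) (h4 : a ≠ e) (h5 : b ≠ c) (h6 : b ≠ d) (h7 : b ≠ e)
    (h8 : c ≠ d) (h9 : c ≠ e) (h10 : d ≠ e) :
    ¬ (SimpleGraph.fromEdgeSet S).IsAcyclic := by
  intro hA
  have adj : ∀ x y : W, s(x,y) ∈ S → x ≠ y → (SimpleGraph.fromEdgeSet S).Adj x y :=
    fun x y hm hne => (fromEdgeSet_adj _).mpr ⟨hm, hne⟩
  refine hA (Walk.cons (adj a b hab h1) (Walk.cons (adj b c hbc h5) (Walk.cons (adj c d hcd h8)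
    (Walk.cons (adj d e hde h10) (Walk.cons (adj e a hea (Ne.symm h4)) Walk.nil))))) ?_
  constructor
  · constructor
    · simp [Walk.isTrail_def, Sym2.eq_iff]
      tauto
    · simp
  · simp [Sym2.eq_iff]
    tauto


end AuxNBC
end AuxNBC

section AuxConstr
namespace AuxNBC
variable {V : Type*} [Fintype V] [DecidableEq V]


lemma mem_edgeSet_Gc {G : SimpleGraph V} {ℓ : ℕ} {e : Sym2 (Wc V)} :
    e ∈ (Gc G ℓ).edgeSet ↔
      (∃ a b, G.Adj a b ∧ e = s(Sum.inl a, Sum.inl b)) ∨ e = e0c ∨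
        ∃ v : V, ∃ i < ℓ, e = eC v i ∨ e = fC v i := by
  rw [Gc, edgeSet_sup, Set.mem_union, edgeSet_fromEdgeSet]
  constructor
  · rintro (h | ⟨h, -⟩)
    · left
      induction e using Sym2.ind with
      | _ x y =>
        rw [mem_edgeSet, map_adj'] at h
        obtain ⟨-, a, b, hab, ha, hb⟩ := h
        exact ⟨a, b, hab, by simp [← ha, ← hb]⟩
    · rcases h with h | h
      · right; left; simpa using h
      · right; right; exact h
  · rintro (⟨a, b, hab, rfl⟩ | h)
    · left; rw [mem_edgeSet, map_adj']; exact ⟨by simpa using hab.ne, a, b, hab, rfl, rfl⟩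
    · right
      refine ⟨?_, ?_⟩
      · rcases h with rfl | h
        · exact Or.inl rfl
        · exact Or.inr h
      rcases h with rfl | ⟨v, i, hi, rfl | rfl⟩ <;>
        simp [e0c, eC, fC, yc, zc, Sym2.isDiag_iff_proj_eq]

lemma mem_tauC {ℓ : ℕ} {e : Sym2 (Wc V)} :
    e ∈ tauC (V := V) ℓ ↔ ∃ v : V, ∃ i < ℓ, e = eC v i := by
  simp [tauC, eq_comm]

lemma eC_inj {v u : V} {i j : ℕ} : eC v i = eC u j ↔ v = u ∧ i = j := by
  constructor
  · intro h
    simp only [eC, zc, Sym2.eq_iff] at h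
    rcases h with ⟨-, h⟩ | ⟨h, -⟩ <;> simp_all
  · rintro ⟨rfl, rfl⟩; rfl

lemma fC_inj {v u : V} {i j : ℕ} : fC v i = fC u j ↔ v = u ∧ i = j := by
  constructor
  · intro h
    simp only [fC, Sym2.eq_iff] at h
    rcases h with ⟨h, -⟩ | ⟨h, -⟩ <;> simp_all
  · rintro ⟨rfl, rfl⟩; rfl

lemma eC_ne_fC {v u : V} {i j : ℕ} : eC v i ≠ fC u j := by
  simp [eC, fC, zc, Sym2.eq_iff]

lemma e0c_ne_eC {v : V} {i : ℕ} : e0c ≠ eC v i := by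
  simp [e0c, eC, zc, yc, Sym2.eq_iff]

lemma e0c_ne_fC {v : V} {i : ℕ} : e0c ≠ fC v i := by
  simp [e0c, fC, zc, yc, Sym2.eq_iff]

lemma card_tauC {ℓ : ℕ} : (tauC (V := V) ℓ).card = ℓ * Fintype.card V := by
  rw [tauC, Finset.card_image_of_injective, Finset.card_product]
  · simp [mul_comm]
  · intro p q h
    rcases eC_inj.mp h with ⟨h1, h2⟩
    exact Prod.ext h1 h2


end AuxNBC
end AuxConstr

/-- z_{v,i} as a vertex -/
abbrev AuxNBC.zzc {V : Type*} (v : V) (i : ℕ) : Wc V := Sum.inr (Sum.inl (v, i))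

namespace AuxNBC
theorem aux_fwd {V : Type*} [Fintype V] [DecidableEq V]
    (G : SimpleGraph V) (α : ℝ) (hα : 0 < α) (ℓ : ℕ) (hℓ : 1 ≤ ℓ)
    (ord : Sym2 (Wc V) → ℕ) (hord : OrdOKc G ℓ ord) :
    (∀ B : Finset (Sym2 (Wc V)),
      IsTruncNBCBasis (Gc G ℓ) (ℓ * Fintype.card V + ⌊α * Fintype.card V⌋₊ + 1) ord B →
      tauC ℓ ⊆ B →
        (∀ u v : V, (∃ i < ℓ, fC u i ∈ B) → (∃ j < ℓ, fC v j ∈ B) → u ≠ v → ¬ G.Adj u v) ∧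
        (∀ v : V, ∀ i < ℓ, ∀ j < ℓ, fC v i ∈ B → fC v j ∈ B → i = j)) := by
  obtain ⟨hord1, hord2, hord3, hord4⟩ := hord
  intro B hB htau
  obtain ⟨⟨hBe, hBac⟩, hBcard, hBnbc⟩ := hB
  constructor
  · -- (a)
    rintro u v ⟨i, hi, hfi⟩ ⟨j, hj, hfj⟩ hne hadj
    apply hBnbc
    set euv : Sym2 (Wc V) := s(Sum.inl u, Sum.inl v) with heuv
    refine ⟨insert euv {fC u i, eC u i, eC v j, fC v j}, euv, Or.inl ⟨?_, ?_, ?_⟩,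
      Finset.mem_insert_self _ _, ?_, ?_⟩
    · -- subset of edge set
      intro f hf
      simp only [Finset.coe_insert, Set.mem_insert_iff, Finset.coe_insert,
        Finset.mem_coe, Finset.mem_insert, Finset.mem_singleton] at hf
      rw [mem_edgeSet_Gc]
      rcases hf with rfl | rfl | rfl | rfl | rfl
      · exact Or.inl ⟨u, v, hadj, rfl⟩
      · exact Or.inr (Or.inr ⟨u, i, hi, Or.inr rfl⟩)
      · exact Or.inr (Or.inr ⟨u, i, hi, Or.inl rfl⟩)
      · exact Or.inr (Or.inr ⟨v, j, hj, Or.inl rfl⟩)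
      · exact Or.inr (Or.inr ⟨v, j, hj, Or.inr rfl⟩)
    · -- not acyclic: 5-cycle inl u, inl v, zz v j, zc, zz u i
      apply not_acyclic_five _ (Sum.inl u) (Sum.inl v) (zzc v j) zc (zzc u i)
      · simp [euv]
      · simp only [Finset.coe_insert, Set.mem_insert_iff, Finset.mem_coe, Finset.mem_insert,
          Finset.mem_singleton]
        right; right; right; right
        rw [fC, Sym2.eq_swap]
      · simp only [Finset.coe_insert, Set.mem_insert_iff, Finset.mem_coe, Finset.mem_insert,
          Finset.mem_singleton]
        right; right; right; left
        rw [eC, Sym2.eq_swap]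
      · simp only [Finset.coe_insert, Set.mem_insert_iff, Finset.mem_coe, Finset.mem_insert,
          Finset.mem_singleton]
        right; right; left; rfl
      · simp only [Finset.coe_insert, Set.mem_insert_iff, Finset.mem_coe, Finset.mem_insert,
          Finset.mem_singleton]
        right; left; rfl
      · simpa using hne
      · simp [zzc, zc]
      · simp [zzc, zc]
      · simp [zzc, zc]
      · simp [zzc, zc]
      · simp [zzc, zc]
      · simp [zzc, zc]
      · simp [zzc, zc]
      · simp only [zzc, ne_eq, Sum.inr.injEq, Sum.inl.injEq, Prod.mk.injEq, not_and]
        exact fun h _ => hne h.symm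
      · simp [zzc, zc]
    · -- deletions acyclic
      intro e he
      simp only [Finset.mem_insert, Finset.mem_singleton] at he
      have hvu : v ≠ u := Ne.symm hne
      rcases he with rfl | rfl | rfl | rfl | rfl
      · -- erase euv
        refine acyclic_fromEdgeSet_of_parent _
          (fun w => match w with
            | Sum.inl w' => zzc w' (if w' = u then i else j)
            | Sum.inr _ => zc)
          (fun w => match w with
            | Sum.inl _ => 2
            | Sum.inr (Sum.inl _) => 1
            | Sum.inr (Sum.inr _) => 0) ?_
        intro f hf
        rw [Finset.coe_erase, Set.mem_diff] at hf
        obtain ⟨hf1, hf2⟩ := hf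
        rw [Set.mem_singleton_iff] at hf2
        simp only [Finset.mem_coe, Finset.mem_insert, Finset.mem_singleton] at hf1
        rcases hf1 with rfl | rfl | rfl | rfl | rfl
        · exact absurd rfl hf2
        · exact ⟨Sum.inl u, zzc u i, by rw [fC, Sym2.eq_swap], by simp, by norm_num⟩
        · refine ⟨zzc u i, zc, ?_, ?_, ?_⟩
          · rw [Sym2.eq_swap]; rfl
          · rfl
          · exact Nat.zero_lt_one
        · refine ⟨zzc v j, zc, ?_, ?_, ?_⟩
          · rw [Sym2.eq_swap]; rfl
          · rfl
          · exact Nat.zero_lt_one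
        · exact ⟨Sum.inl v, zzc v j, by rw [fC, Sym2.eq_swap], by simp [hvu], by norm_num⟩
      · -- erase fC u i
        refine acyclic_fromEdgeSet_of_parent _
          (fun w => match w with
            | Sum.inl w' => if w' = u then Sum.inl v else zzc w' j
            | Sum.inr _ => zc)
          (fun w => match w with
            | Sum.inl w' => if w' = u then 3 else 2
            | Sum.inr (Sum.inl _) => 1
            | Sum.inr (Sum.inr _) => 0) ?_
        intro f hf
        rw [Finset.coe_erase, Set.mem_diff] at hf
        obtain ⟨hf1, hf2⟩ := hf
        rw [Set.mem_singleton_iff] at hf2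
        simp only [Finset.mem_coe, Finset.mem_insert, Finset.mem_singleton] at hf1
        rcases hf1 with rfl | rfl | rfl | rfl | rfl
        · exact ⟨Sum.inl u, Sum.inl v, rfl, by simp, by simp [hvu]⟩
        · exact absurd rfl hf2
        · refine ⟨zzc u i, zc, ?_, ?_, ?_⟩
          · rw [Sym2.eq_swap]; rfl
          · rfl
          · exact Nat.zero_lt_one
        · refine ⟨zzc v j, zc, ?_, ?_, ?_⟩
          · rw [Sym2.eq_swap]; rfl
          · rfl
          · exact Nat.zero_lt_one
        · exact ⟨Sum.inl v, zzc v j, by rw [fC, Sym2.eq_swap], by simp [hvu], by simp [hvu]⟩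
      · -- erase eC u i
        refine acyclic_fromEdgeSet_of_parent _
          (fun w => match w with
            | Sum.inl w' => if w' = u then Sum.inl v else zzc w' j
            | Sum.inr (Sum.inl p) => if p = (u, i) then Sum.inl u else zc
            | Sum.inr (Sum.inr _) => zc)
          (fun w => match w with
            | Sum.inl w' => if w' = u then 3 else 2
            | Sum.inr (Sum.inl p) => if p = (u, i) then 4 else 1
            | Sum.inr (Sum.inr _) => 0) ?_
        intro f hf
        rw [Finset.coe_erase, Set.mem_diff] at hf
        obtain ⟨hf1, hf2⟩ := hf
        rw [Set.mem_singleton_iff] at hf2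
        simp only [Finset.mem_coe, Finset.mem_insert, Finset.mem_singleton] at hf1
        rcases hf1 with rfl | rfl | rfl | rfl | rfl
        · exact ⟨Sum.inl u, Sum.inl v, rfl, by simp, by simp [hvu]⟩
        · exact ⟨zzc u i, Sum.inl u, rfl, by simp, by simp⟩
        · exact absurd rfl hf2
        · refine ⟨zzc v j, zc, ?_, ?_, ?_⟩
          · rw [Sym2.eq_swap]; rfl
          · simp [Prod.ext_iff, hvu]
          · simp [Prod.ext_iff, hvu, zc]
        · exact ⟨Sum.inl v, zzc v j, by rw [fC, Sym2.eq_swap], by simp [hvu], by simp [hvu, Prod.ext_iff]⟩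
      · -- erase eC v j
        refine acyclic_fromEdgeSet_of_parent _
          (fun w => match w with
            | Sum.inl w' => if w' = v then Sum.inl u else zzc w' i
            | Sum.inr (Sum.inl p) => if p = (v, j) then Sum.inl v else zc
            | Sum.inr (Sum.inr _) => zc)
          (fun w => match w with
            | Sum.inl w' => if w' = v then 3 else 2
            | Sum.inr (Sum.inl p) => if p = (v, j) then 4 else 1
            | Sum.inr (Sum.inr _) => 0) ?_
        intro f hf
        rw [Finset.coe_erase, Set.mem_diff] at hf
        obtain ⟨hf1, hf2⟩ := hf
        rw [Set.mem_singleton_iff] at hf2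
        simp only [Finset.mem_coe, Finset.mem_insert, Finset.mem_singleton] at hf1
        rcases hf1 with rfl | rfl | rfl | rfl | rfl
        · exact ⟨Sum.inl v, Sum.inl u, by rw [Sym2.eq_swap], by simp, by simp [hne]⟩
        · exact ⟨Sum.inl u, zzc u i, by rw [fC, Sym2.eq_swap], by simp [hne], by simp [hne, Prod.ext_iff]⟩
        · refine ⟨zzc u i, zc, ?_, ?_, ?_⟩
          · rw [Sym2.eq_swap]; rfl
          · simp [Prod.ext_iff, hne]
          · simp [Prod.ext_iff, hne, zc]
        · exact absurd rfl hf2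
        · exact ⟨zzc v j, Sum.inl v, rfl, by simp, by simp⟩
      · -- erase fC v j
        refine acyclic_fromEdgeSet_of_parent _
          (fun w => match w with
            | Sum.inl w' => if w' = v then Sum.inl u else zzc w' i
            | Sum.inr _ => zc)
          (fun w => match w with
            | Sum.inl w' => if w' = v then 3 else 2
            | Sum.inr (Sum.inl _) => 1
            | Sum.inr (Sum.inr _) => 0) ?_
        intro f hf
        rw [Finset.coe_erase, Set.mem_diff] at hf
        obtain ⟨hf1, hf2⟩ := hf
        rw [Set.mem_singleton_iff] at hf2
        simp only [Finset.mem_coe, Finset.mem_insert, Finset.mem_singleton] at hf1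
        rcases hf1 with rfl | rfl | rfl | rfl | rfl
        · exact ⟨Sum.inl v, Sum.inl u, by rw [Sym2.eq_swap], by simp, by simp [hne]⟩
        · exact ⟨Sum.inl u, zzc u i, by rw [fC, Sym2.eq_swap], by simp [hne], by simp [hne]⟩
        · refine ⟨zzc u i, zc, ?_, ?_, ?_⟩
          · rw [Sym2.eq_swap]; rfl
          · rfl
          · exact Nat.zero_lt_one
        · refine ⟨zzc v j, zc, ?_, ?_, ?_⟩
          · rw [Sym2.eq_swap]; rfl
          · rfl
          · exact Nat.zero_lt_one
        · exact absurd rfl hf2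
    · -- minimality
      intro f hf hfe
      simp only [Finset.mem_insert, Finset.mem_singleton] at hf
      have h1 : ord euv < ord (eC u i) := hord3 u v hadj u i hi
      have h2 : ord euv < ord (eC v j) := hord3 u v hadj v j hj
      rcases hf with rfl | rfl | rfl | rfl | rfl
      · exact absurd rfl hfe
      · exact lt_trans h1 (hord4 u i hi u i hi)
      · exact h1
      · exact h2
      · exact lt_trans h2 (hord4 v j hj v j hj)
    · -- erase subset B
      intro f hf
      rw [Finset.mem_erase] at hf
      obtain ⟨hfe, hf⟩ := hf
      simp only [Finset.mem_insert, Finset.mem_singleton] at hf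
      rcases hf with rfl | rfl | rfl | rfl | rfl
      · exact absurd rfl hfe
      · exact hfi
      · exact htau (mem_tauC.mpr ⟨u, i, hi, rfl⟩)
      · exact htau (mem_tauC.mpr ⟨v, j, hj, rfl⟩)
      · exact hfj
  · -- (b)
    intro v i hi j hj hfi hfj
    by_contra hij
    refine not_acyclic_four (↑B) (Sum.inl v) (zzc v i) zc (zzc v j) ?_ ?_ ?_ ?_ ?_ ?_ ?_ ?_ ?_ ?_ hBac
    · rw [show s(Sum.inl v, zzc v i) = fC v i by rw [fC, Sym2.eq_swap]]; exact hfi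
    · rw [show s(zzc v i, zc) = eC v i by rw [eC, Sym2.eq_swap]]
      exact htau (mem_tauC.mpr ⟨v, i, hi, rfl⟩)
    · rw [show s(zc, zzc v j) = eC v j from rfl]
      exact htau (mem_tauC.mpr ⟨v, j, hj, rfl⟩)
    · rw [show s(zzc v j, Sum.inl v) = fC v j from rfl]; exact hfj
    · simp [zzc]
    · simp [zc]
    · simp [zzc]
    · simp [zzc, zc]
    · simp [zzc, Prod.ext_iff]; exact hij
    · simp [zzc, zc]

theorem aux_conv {V : Type*} [Fintype V] [DecidableEq V]
    (G : SimpleGraph V) (α : ℝ) (hα : 0 < α) (ℓ : ℕ) (hℓ : 1 ≤ ℓ)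
    (ord : Sym2 (Wc V) → ℕ) (hord : OrdOKc G ℓ ord) :
    (∀ I : Finset V, (∀ u ∈ I, ∀ v ∈ I, u ≠ v → ¬ G.Adj u v) →
      I.card = ⌊α * Fintype.card V⌋₊ → ∀ idx : V → ℕ, (∀ v ∈ I, idx v < ℓ) →
      IsTruncNBCBasis (Gc G ℓ) (ℓ * Fintype.card V + ⌊α * Fintype.card V⌋₊ + 1) ord
        (tauC ℓ ∪ insert e0c (I.image fun v => fC v (idx v)))) := by
  obtain ⟨hord1, hord2, hord3, hord4⟩ := hord
  intro I hI hIcard idx hidx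
  set B : Finset (Sym2 (Wc V)) := tauC ℓ ∪ insert e0c (I.image fun v => fC v (idx v)) with hBdef
  have hmemB : ∀ e : Sym2 (Wc V), e ∈ B ↔
      (∃ v, ∃ i < ℓ, e = eC v i) ∨ e = e0c ∨ ∃ v ∈ I, e = fC v (idx v) := by
    intro e
    constructor
    · intro h
      rcases Finset.mem_union.mp h with h | h
      · exact Or.inl (mem_tauC.mp h)
      · rcases Finset.mem_insert.mp h with h | h
        · exact Or.inr (Or.inl h)
        · obtain ⟨v, hv, he⟩ := Finset.mem_image.mp h
          exact Or.inr (Or.inr ⟨v, hv, he.symm⟩)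
    · rintro (⟨v, i, hi, rfl⟩ | rfl | ⟨v, hv, rfl⟩)
      · exact Finset.mem_union_left _ (mem_tauC.mpr ⟨v, i, hi, rfl⟩)
      · exact Finset.mem_union_right _ (Finset.mem_insert_self _ _)
      · exact Finset.mem_union_right _ (Finset.mem_insert_of_mem (Finset.mem_image_of_mem _ hv))
  have he0B : e0c ∈ B := (hmemB _).mpr (Or.inr (Or.inl rfl))
  -- B is acyclic
  have hBac : (SimpleGraph.fromEdgeSet (↑B : Set (Sym2 (Wc V)))).IsAcyclic := by
    refine acyclic_fromEdgeSet_of_parent _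
      (fun w => match w with
        | Sum.inl v => zzc v (idx v)
        | Sum.inr _ => zc)
      (fun w => match w with
        | Sum.inl _ => 2
        | Sum.inr (Sum.inl _) => 1
        | Sum.inr (Sum.inr b) => if b then 1 else 0) ?_
    intro f hf
    rcases (hmemB f).mp hf with ⟨v, i, hi, rfl⟩ | rfl | ⟨v, hv, rfl⟩
    · refine ⟨zzc v i, zc, ?_, ?_, ?_⟩
      · rw [Sym2.eq_swap]; rfl
      · rfl
      · exact Nat.zero_lt_one
    · refine ⟨yc, zc, rfl, rfl, ?_⟩
      exact Nat.zero_lt_one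
    · refine ⟨Sum.inl v, zzc v (idx v), ?_, ?_, ?_⟩
      · rw [Sym2.eq_swap]; rfl
      · rfl
      · exact Nat.one_lt_two
  -- the cardinality of B
  have hBcard : B.card = ℓ * Fintype.card V + ⌊α * Fintype.card V⌋₊ + 1 := by
    rw [hBdef, Finset.card_union_of_disjoint, Finset.card_insert_of_notMem,
      Finset.card_image_of_injOn]
    · rw [show (tauC ℓ : Finset (Sym2 (Wc V))).card = ℓ * Fintype.card V from ?_, hIcard]
      · ring
      · rw [tauC, Finset.card_image_of_injective, Finset.card_product]
        · simp [mul_comm]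
        · intro p q h
          obtain ⟨h1, h2⟩ := eC_inj.mp h
          exact Prod.ext h1 h2
    · intro a ha b hb h
      exact (fC_inj.mp h).1
    · intro h
      obtain ⟨v, hv, he⟩ := Finset.mem_image.mp h
      exact e0c_ne_fC he.symm
    · rw [Finset.disjoint_left]
      intro e he hins
      obtain ⟨v, i, hi, rfl⟩ := mem_tauC.mp he
      rcases Finset.mem_insert.mp hins with h | h
      · exact e0c_ne_eC h.symm
      · obtain ⟨u, hu, hh⟩ := Finset.mem_image.mp h
        exact eC_ne_fC hh.symm
  refine ⟨⟨?_, hBac⟩, hBcard, ?_⟩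
  · -- subset of edge set
    intro f hf
    rw [Finset.mem_coe] at hf
    rw [mem_edgeSet_Gc]
    rcases (hmemB f).mp hf with ⟨v, i, hi, rfl⟩ | rfl | ⟨v, hv, rfl⟩
    · exact Or.inr (Or.inr ⟨v, i, hi, Or.inl rfl⟩)
    · exact Or.inr (Or.inl rfl)
    · exact Or.inr (Or.inr ⟨v, idx v, hidx v hv, Or.inr rfl⟩)
  · -- no broken circuit
    rintro ⟨C, e, hcirc, heC, hmin, hsub⟩
    rcases hcirc with ⟨hCe, hCnac, hCdel⟩ | ⟨⟨hCe, hCac⟩, hCcard⟩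
    · -- graphic circuit case
      have hCsub : ∀ f ∈ C, f = e ∨ f ∈ B := by
        intro f hf
        by_cases h : f = e
        · exact Or.inl h
        · exact Or.inr (hsub (Finset.mem_erase.mpr ⟨h, hf⟩))
      have hcontraB : e ∈ B → False := by
        intro heB
        refine hCnac (isAcyclic_anti (fromEdgeSet_mono ?_) hBac)
        intro f hf
        rw [Finset.mem_coe] at hf ⊢
        rcases hCsub f hf with rfl | h
        · exact heB
        · exact h
      have heGc := hCe (Finset.mem_coe.mpr heC)
      rcases mem_edgeSet_Gc.mp heGc with ⟨a, b, hab, rfl⟩ | rfl | ⟨v, i, hi, rfl | rfl⟩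
      · -- e is a G-edge
        have hab' : a ≠ b := hab.ne
        have key : ∀ (x w : V), G.Adj x w → x ∉ I → s((Sum.inl x : Wc V), Sum.inl w) = s(Sum.inl a, Sum.inl b) → False := by
          intro x w hxw hxI hxe
          refine hCnac (isAcyclic_anti (fromEdgeSet_mono (?_ :
            (↑C : Set (Sym2 (Wc V))) ⊆ ↑(insert s(Sum.inl x, Sum.inl w) B))) ?_)
          · intro f hf
            rw [Finset.mem_coe] at hf ⊢
            rcases hCsub f hf with rfl | h
            · rw [← hxe]
              exact Finset.mem_insert_self _ _
            · exact Finset.mem_insert_of_mem h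
          · refine acyclic_fromEdgeSet_of_parent _
              (fun ww => if ww = Sum.inl x then Sum.inl w else
                (match ww with
                  | Sum.inl v' => zzc v' (idx v')
                  | Sum.inr _ => zc))
              (fun ww => if ww = Sum.inl x then 3 else
                (match ww with
                  | Sum.inl _ => 2
                  | Sum.inr (Sum.inl _) => 1
                  | Sum.inr (Sum.inr b') => if b' then 1 else 0)) ?_
            intro f hf
            rw [Finset.coe_insert, Set.mem_insert_iff] at hf
            rcases hf with rfl | hf
            · refine ⟨Sum.inl x, Sum.inl w, rfl, by simp, ?_⟩
              have : Sum.inl w ≠ (Sum.inl x : Wc V) := by simpa using hxw.ne'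
              simp [this]
            · rw [Finset.mem_coe] at hf
              rcases (hmemB f).mp hf with ⟨v', i', hi', rfl⟩ | rfl | ⟨v', hv', rfl⟩
              · refine ⟨zzc v' i', zc, by rw [Sym2.eq_swap]; rfl, by simp [zzc, zc], ?_⟩
                simp [zzc, zc]
              · refine ⟨yc, zc, rfl, by simp [yc, zc], by simp [yc, zc]⟩
              · have hvx : v' ≠ x := fun h => hxI (h ▸ hv')
                refine ⟨Sum.inl v', zzc v' (idx v'), by rw [Sym2.eq_swap]; rfl, by simp [hvx, zzc], ?_⟩
                simp [hvx, zzc]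
        by_cases haI : a ∈ I
        · by_cases hbI : b ∈ I
          · exact hI a haI b hbI hab' hab
          · exact key b a hab.symm hbI (Sym2.eq_swap)
        · exact key a b hab haI rfl
      · -- e = e0c
        exact hcontraB he0B
      · -- e = eC v i
        exact hcontraB ((hmemB _).mpr (Or.inl ⟨v, i, hi, rfl⟩))
      · -- e = fC v i
        by_cases hvI : v ∈ I
        · by_cases hii : i = idx v
          · exact hcontraB ((hmemB _).mpr (Or.inr (Or.inr ⟨v, hvI, by rw [hii]⟩)))
          · -- i ≠ idx v : the circuit must contain eC v i, contradicting minimality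
            have heCC : eC v i ∈ C := by
              by_contra hnot
              refine hCnac (isAcyclic_anti (fromEdgeSet_mono (?_ :
                (↑C : Set (Sym2 (Wc V))) ⊆ ↑(insert (fC v i) (B.erase (eC v i))))) ?_)
              · intro f hf
                rw [Finset.mem_coe] at hf ⊢
                rcases hCsub f hf with rfl | h
                · exact Finset.mem_insert_self _ _
                · refine Finset.mem_insert_of_mem (Finset.mem_erase.mpr ⟨?_, h⟩)
                  intro hfe
                  exact hnot (hfe ▸ hf)
              · refine acyclic_fromEdgeSet_of_parent _
                  (fun ww => if ww = zzc v i then Sum.inl v else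
                    (match ww with
                      | Sum.inl v' => zzc v' (idx v')
                      | Sum.inr _ => zc))
                  (fun ww => if ww = zzc v i then 3 else
                    (match ww with
                      | Sum.inl _ => 2
                      | Sum.inr (Sum.inl _) => 1
                      | Sum.inr (Sum.inr b') => if b' then 1 else 0)) ?_
                intro f hf
                rw [Finset.coe_insert, Set.mem_insert_iff] at hf
                rcases hf with rfl | hf
                · refine ⟨zzc v i, Sum.inl v, rfl, by simp, by simp [zzc]⟩
                · rw [Finset.mem_coe, Finset.mem_erase] at hf
                  obtain ⟨hfne, hfB⟩ := hf
                  rcases (hmemB f).mp hfB with ⟨v', i', hi', rfl⟩ | rfl | ⟨v', hv', rfl⟩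
                  · have : (v', i') ≠ (v, i) := by
                      intro h
                      rw [Prod.mk.injEq] at h
                      exact hfne (by rw [h.1, h.2])
                    have hzz : zzc v' i' ≠ zzc v i := by
                      simpa [zzc, Prod.mk.injEq, not_and] using fun h1 h2 => this (by rw [h1, h2])
                    refine ⟨zzc v' i', zc, by rw [Sym2.eq_swap]; rfl, by simp [hzz, zzc, zc], ?_⟩
                    simp [hzz, zzc, zc]
                  · refine ⟨yc, zc, rfl, by simp [yc, zc, zzc], by simp [yc, zc, zzc]⟩
                  · have hzz : zzc v' (idx v') ≠ zzc v i := by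
                      simp only [zzc, ne_eq, Sum.inr.injEq, Sum.inl.injEq, Prod.mk.injEq, not_and]
                      intro h1 h2
                      exact hii (by rw [← h2, h1])
                    refine ⟨Sum.inl v', zzc v' (idx v'), by rw [Sym2.eq_swap]; rfl, by simp [hzz, zzc], ?_⟩
                    simp [hzz, zzc]
            have h1 : ord (fC v i) < ord (eC v i) :=
              hmin (eC v i) heCC (eC_ne_fC)
            exact absurd (hord4 v i hi v i hi) (by omega)
        · -- v ∉ I : pendant edge
          refine hCnac (isAcyclic_anti (fromEdgeSet_mono (?_ :
            (↑C : Set (Sym2 (Wc V))) ⊆ ↑(insert (fC v i) B))) ?_)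
          · intro f hf
            rw [Finset.mem_coe] at hf ⊢
            rcases hCsub f hf with rfl | h
            · exact Finset.mem_insert_self _ _
            · exact Finset.mem_insert_of_mem h
          · refine acyclic_fromEdgeSet_of_parent _
              (fun ww => if ww = Sum.inl v then zzc v i else
                (match ww with
                  | Sum.inl v' => zzc v' (idx v')
                  | Sum.inr _ => zc))
              (fun ww => match ww with
                | Sum.inl _ => 2
                | Sum.inr (Sum.inl _) => 1
                | Sum.inr (Sum.inr b') => if b' then 1 else 0) ?_
            intro f hf
            rw [Finset.coe_insert, Set.mem_insert_iff] at hf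
            rcases hf with rfl | hf
            · refine ⟨Sum.inl v, zzc v i, by rw [Sym2.eq_swap]; rfl, by simp, ?_⟩
              exact Nat.one_lt_two
            · rw [Finset.mem_coe] at hf
              rcases (hmemB f).mp hf with ⟨v', i', hi', rfl⟩ | rfl | ⟨v', hv', rfl⟩
              · refine ⟨zzc v' i', zc, by rw [Sym2.eq_swap]; rfl, by simp [zzc, zc], Nat.zero_lt_one⟩
              · exact ⟨yc, zc, rfl, by simp [yc, zc], Nat.zero_lt_one⟩
              · have hvx : v' ≠ v := fun h => hvI (h ▸ hv')
                refine ⟨Sum.inl v', zzc v' (idx v'), by rw [Sym2.eq_swap]; rfl, by simp [hvx], Nat.one_lt_two⟩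
    · -- forest-type circuit case
      have herase : C.erase e = B := by
        refine Finset.eq_of_subset_of_card_le hsub ?_
        rw [Finset.card_erase_of_mem heC, hCcard, hBcard]; omega
      have heB : e ∉ B := by
        rw [← herase]
        exact Finset.notMem_erase e C
      have heGc := hCe (Finset.mem_coe.mpr heC)
      rcases mem_edgeSet_Gc.mp heGc with ⟨a, b, hab, rfl⟩ | rfl | ⟨v, i, hi, rfl | rfl⟩
      · -- e is a G-edge : contradicts e0c being smallest
        have he0C : e0c ∈ C := Finset.erase_subset _ _ (herase ▸ he0B)
        have hne : e0c ≠ s(Sum.inl a, Sum.inl b) := by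
          simp [e0c, yc, zc, Sym2.eq_iff]
        have h1 : ord s(Sum.inl a, Sum.inl b) < ord e0c := hmin e0c he0C hne
        exact absurd (hord2 a b hab) (by omega)
      · exact heB he0B
      · exact heB ((hmemB _).mpr (Or.inl ⟨v, i, hi, rfl⟩))
      · -- e = fC v i : contradicts eC v 0 being smaller
        have h0B : eC v 0 ∈ B := (hmemB _).mpr (Or.inl ⟨v, 0, hℓ, rfl⟩)
        have h0C : eC v 0 ∈ C := Finset.erase_subset _ _ (herase ▸ h0B)
        have h1 : ord (fC v i) < ord (eC v 0) := hmin (eC v 0) h0C (eC_ne_fC)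
        exact absurd (hord4 v 0 hℓ v i hi) (by omega)

end AuxNBC

/-- Structure of the facets of the link of `τ` in the broken circuit complex of the graphic
matroid of `G'` truncated to rank `ℓn + ⌊αn⌋ + 1` (facets of `X_τ` = NBC bases `B ⊇ τ`):
(a) the vertices `v` with some `f_{v,i} ∈ B` form an independent set of `G`; (b) at most one
index `i` per vertex is used. Conversely, each independent set `I` of size `⌊αn⌋` and each
choice of indices `i_v ∈ [ℓ]` yields the facet `{f_{v,i_v} : v ∈ I} ∪ {e_0}` of `X_τ`. -/

theorem link_facets_of_general_construction {V : Type*} [Fintype V] [DecidableEq V]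
    (G : SimpleGraph V) (α : ℝ) (hα : 0 < α) (ℓ : ℕ) (hℓ : 1 ≤ ℓ)
    (ord : Sym2 (Wc V) → ℕ) (hord : OrdOKc G ℓ ord) :
    (∀ B : Finset (Sym2 (Wc V)),
      IsTruncNBCBasis (Gc G ℓ) (ℓ * Fintype.card V + ⌊α * Fintype.card V⌋₊ + 1) ord B →
      tauC ℓ ⊆ B →
        (∀ u v : V, (∃ i < ℓ, fC u i ∈ B) → (∃ j < ℓ, fC v j ∈ B) → u ≠ v → ¬ G.Adj u v) ∧
        (∀ v : V, ∀ i < ℓ, ∀ j < ℓ, fC v i ∈ B → fC v j ∈ B → i = j)) ∧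
    (∀ I : Finset V, (∀ u ∈ I, ∀ v ∈ I, u ≠ v → ¬ G.Adj u v) →
      I.card = ⌊α * Fintype.card V⌋₊ → ∀ idx : V → ℕ, (∀ v ∈ I, idx v < ℓ) →
      IsTruncNBCBasis (Gc G ℓ) (ℓ * Fintype.card V + ⌊α * Fintype.card V⌋₊ + 1) ord
        (tauC ℓ ∪ insert e0c (I.image fun v => fC v (idx v)))) := by
  exact ⟨AuxNBC.aux_fwd G α hα ℓ hℓ ord hord, AuxNBC.aux_conv G α hα ℓ hℓ ord hord⟩
end
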